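/- arXiv:2210.16816 — 6 statements merged into one kernel-verified Lean document; each statement's English description precedes it below -/
import Mathlib

section
/- If M is an R-module admitting a short exact sequence 0 → M → P → G → 0 with P projective and G projectively coresolved Gorenstein flat (PGF), then M is PGF. -/
open CategoryTheory

universe u

variable (R : Type u) [CommRing R]

/-- `M` is projectively coresolved Gorenstein flat (PGF). -/
def IsPGF (M : ModuleCat.{u} R) : Prop :=
  ∃ (P : ℤ → ModuleCat.{u} R) (d : (i : ℤ) → P (i + 1) →ₗ[R] P i),
    (∀ i, Module.Projective R (P i)) ∧
    (∀ i, Function.Exact (d (i + 1)) (d i)) ∧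
    Nonempty (LinearMap.range (d 0) ≃ₗ[R] M) ∧
    ∀ (I : ModuleCat.{u} R), Module.Injective R I →
      ∀ i, Function.Exact ((d (i + 1)).lTensor I) ((d i).lTensor I)

/-- The Tor groups `Tor_i(A, B)` as modules. -/
noncomputable def torM (i : ℕ) (A B : ModuleCat.{u} R) : ModuleCat.{u} R :=
  ((Tor (ModuleCat.{u} R) i).obj A).obj B

/-- `pdLE R n M` means that `M` has projective dimension at most `n`. -/
def pdLE : ℕ → ModuleCat.{u} R → Prop
  | 0, M => Module.Projective R M
  | n + 1, M =>
    ∃ (P : ModuleCat.{u} R) (f : P →ₗ[R] M), Module.Projective R P ∧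
      Function.Surjective f ∧ pdLE n (ModuleCat.of R (LinearMap.ker f))

/-- `pdEq R n M` means that `M` has projective dimension exactly `n`. -/
def pdEq (n : ℕ) (M : ModuleCat.{u} R) : Prop :=
  pdLE R n M ∧ ∀ m : ℕ, pdLE R m M → n ≤ m

/-- `idLE R n M` means that `M` has injective dimension at most `n`. -/
def idLE : ℕ → ModuleCat.{u} R → Prop
  | 0, M => Module.Injective R M
  | n + 1, M =>
    ∃ (I : ModuleCat.{u} R) (f : M →ₗ[R] I), Module.Injective R I ∧
      Function.Injective f ∧ idLE n (ModuleCat.of R (I ⧸ LinearMap.range f))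

/-- `pgfdimLE R n M` means that `M` has a resolution of length `n` by PGF modules. -/
def pgfdimLE : ℕ → ModuleCat.{u} R → Prop
  | 0, M => IsPGF R M
  | n + 1, M =>
    ∃ (G : ModuleCat.{u} R) (f : G →ₗ[R] M), IsPGF R G ∧
      Function.Surjective f ∧ pgfdimLE n (ModuleCat.of R (LinearMap.ker f))

/-- `M` has PGF-dimension exactly `n`. -/
def pgfdimEq (n : ℕ) (M : ModuleCat.{u} R) : Prop :=
  pgfdimLE R n M ∧ ∀ m : ℕ, pgfdimLE R m M → n ≤ m

/-- `M` is a strongly PGF module. -/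
def IsStronglyPGF (M : ModuleCat.{u} R) : Prop :=
  ∃ (P : ModuleCat.{u} R) (f : M →ₗ[R] P) (g : P →ₗ[R] M),
    Module.Projective R P ∧
    Function.Injective f ∧ Function.Exact f g ∧ Function.Surjective g ∧
    ∀ (I : ModuleCat.{u} R), Module.Injective R I →
      Function.Injective (f.lTensor I) ∧ Function.Exact (f.lTensor I) (g.lTensor I)

/-- `M` is a strongly `n`-PGF module. -/
def IsStronglyNPGF (n : ℕ) (M : ModuleCat.{u} R) : Prop :=
  ∃ (F : ModuleCat.{u} R) (f : M →ₗ[R] F) (g : F →ₗ[R] M),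
    Function.Injective f ∧ Function.Exact f g ∧ Function.Surjective g ∧
    pdLE R n F ∧
    ∀ (I : ModuleCat.{u} R), Module.Injective R I →
      Subsingleton (torM R (n + 1) I M)

/-- `M` is a direct summand of `N`. -/
def IsDirectSummand (M N : ModuleCat.{u} R) : Prop :=
  ∃ (i : M →ₗ[R] N) (p : N →ₗ[R] M), p ∘ₗ i = LinearMap.id

section AuxTensor

variable {R} {I A B C : Type u} [AddCommGroup I] [AddCommGroup A] [AddCommGroup B]
  [AddCommGroup C] [Module R I] [Module R A] [Module R B] [Module R C]

lemma ltc (g : B →ₗ[R] C) (f : A →ₗ[R] B) (v : TensorProduct R I A) :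
    (g ∘ₗ f).lTensor I v = g.lTensor I (f.lTensor I v) := by
  rw [LinearMap.lTensor_comp]; rfl

lemma tdecomp (v : TensorProduct R I (A × B)) :
    v = (LinearMap.inl R A B).lTensor I ((LinearMap.fst R A B).lTensor I v)
      + (LinearMap.inr R A B).lTensor I ((LinearMap.snd R A B).lTensor I v) := by
  have h1 : (LinearMap.inl R A B ∘ₗ LinearMap.fst R A B)
      + (LinearMap.inr R A B ∘ₗ LinearMap.snd R A B)
      = (LinearMap.id : (A × B) →ₗ[R] (A × B)) := by
    apply LinearMap.ext; rintro ⟨a, b⟩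
    simp
  have h2 := congrArg (fun f : (A × B) →ₗ[R] (A × B) => LinearMap.lTensor I f) h1
  simp only [LinearMap.lTensor_add, LinearMap.lTensor_comp, LinearMap.lTensor_id] at h2
  have h3 := DFunLike.congr_fun h2 v
  simpa using h3.symm

lemma tfst_inl (w : TensorProduct R I A) :
    (LinearMap.fst R A B).lTensor I ((LinearMap.inl R A B).lTensor I w) = w := by
  rw [← ltc, LinearMap.fst_comp_inl, LinearMap.lTensor_id]; rfl

lemma tsnd_inl (w : TensorProduct R I A) :
    (LinearMap.snd R A B).lTensor I ((LinearMap.inl R A B).lTensor I w) = 0 := by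
  rw [← ltc, LinearMap.snd_comp_inl, LinearMap.lTensor_zero]; rfl

lemma tfst_inr (w : TensorProduct R I B) :
    (LinearMap.fst R A B).lTensor I ((LinearMap.inr R A B).lTensor I w) = 0 := by
  rw [← ltc, LinearMap.fst_comp_inr, LinearMap.lTensor_zero]; rfl

lemma tsnd_inr (w : TensorProduct R I B) :
    (LinearMap.snd R A B).lTensor I ((LinearMap.inr R A B).lTensor I w) = w := by
  rw [← ltc, LinearMap.snd_comp_inr, LinearMap.lTensor_id]; rfl

end AuxTensor

variable {R}

noncomputable def auxD (Q : ℤ → ModuleCat.{u} R) (Pm : ModuleCat.{u} R) : ℤ → ModuleCat.{u} R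
  | .ofNat 0 => Pm
  | .ofNat 1 => ModuleCat.of R (Q 2 × Pm)
  | .ofNat 2 => ModuleCat.of R (Q 3 × Q 1)
  | .ofNat (n+3) => Q (Int.ofNat (n+3) + 1)
  | .negSucc n => Q (Int.negSucc n + 1)

noncomputable def auxE (Q : ℤ → ModuleCat.{u} R) (d : (i : ℤ) → Q (i+1) →ₗ[R] Q i)
    (Pm : ModuleCat.{u} R) (g' : Pm →ₗ[R] Q 0) (h : Pm →ₗ[R] Q 1) (τ : Q 1 →ₗ[R] Pm)
    (η : Q 1 →ₗ[R] Q 2) : (i : ℤ) → auxD Q Pm (i+1) →ₗ[R] auxD Q Pm i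
  | .ofNat 0 => LinearMap.snd R (Q 2) Pm
      - τ ∘ₗ (d 1 ∘ₗ LinearMap.fst R (Q 2) Pm + h ∘ₗ LinearMap.snd R (Q 2) Pm)
  | .ofNat 1 => LinearMap.prod
      (d 2 ∘ₗ LinearMap.fst R (Q 3) (Q 1) + η ∘ₗ LinearMap.snd R (Q 3) (Q 1))
      (τ ∘ₗ LinearMap.snd R (Q 3) (Q 1))
  | .ofNat 2 => LinearMap.prod (d 3) (0 : Q 4 →ₗ[R] Q 1)
  | .ofNat (n+3) => by exact d (Int.ofNat (n+3) + 1)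
  | .negSucc 0 => g'
  | .negSucc (n+1) => by exact d (Int.negSucc (n+1) + 1)

variable (R)

set_option maxHeartbeats 1000000 in
theorem stmt0 (M P G : ModuleCat.{u} R) (f : M →ₗ[R] P) (g : P →ₗ[R] G)
    (hP : Module.Projective R P) (hG : IsPGF R G)
    (hf : Function.Injective f) (hfg : Function.Exact f g) (hg : Function.Surjective g) :
    IsPGF R M := by
  classical
  obtain ⟨Qc, d, hQproj, hQex, ⟨φ⟩, hQtens⟩ := hG
  haveI : Module.Projective R P := hP
  let d0 : Qc 1 →ₗ[R] Qc 0 := d 0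
  let d1 : Qc 2 →ₗ[R] Qc 1 := d 1
  let d2 : Qc 3 →ₗ[R] Qc 2 := d 2
  let d3 : Qc 4 →ₗ[R] Qc 3 := d 3
  let d4 : Qc 5 →ₗ[R] Qc 4 := d 4
  let dm1 : Qc 0 →ₗ[R] Qc (Int.negSucc 0) := d (Int.negSucc 0)
  -- the corestriction of `g` to `range (d 0)`
  obtain ⟨g', Hgker, Hgrange⟩ :
      ∃ g' : P →ₗ[R] Qc 0, (∀ p, (g' p = 0 ↔ g p = 0)) ∧
        (∀ c : Qc 0, (∃ p, g' p = c) ↔ ∃ x : Qc 1, d0 x = c) := by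
    refine ⟨(LinearMap.range (d 0)).subtype ∘ₗ (φ.symm.toLinearMap ∘ₗ g), fun p => ?_, fun c => ?_⟩
    · simp
    · constructor
      · rintro ⟨p, rfl⟩
        exact LinearMap.mem_range.mp (φ.symm (g p)).2
      · rintro ⟨x, rfl⟩
        obtain ⟨p, hp⟩ := hg (φ ⟨d 0 x, LinearMap.mem_range.mpr ⟨x, rfl⟩⟩)
        refine ⟨p, ?_⟩
        simp [hp, d0]
  -- a lift `h` of `g'` through `d0`
  obtain ⟨h, Hhmap⟩ : ∃ h : P →ₗ[R] Qc 1, d0 ∘ₗ h = g' := by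
    obtain ⟨h0, hh0⟩ := Module.projective_lifting_property ((d 0).rangeRestrict)
      (LinearMap.codRestrict (LinearMap.range (d 0)) g'
        (fun p => LinearMap.mem_range.mpr ((Hgrange (g' p)).mp ⟨p, rfl⟩)))
      (LinearMap.surjective_rangeRestrict _)
    refine ⟨h0, LinearMap.ext fun p => ?_⟩
    have h2 := congrArg Subtype.val (DFunLike.congr_fun hh0 p)
    simpa using h2
  have Hh : ∀ p, d0 (h p) = g' p := fun p => DFunLike.congr_fun Hhmap p
  -- a lift `τ` of `d0` through `g'`
  obtain ⟨τ, Hτmap⟩ : ∃ τ : Qc 1 →ₗ[R] P, g' ∘ₗ τ = d0 := by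
    haveI := hQproj 1
    obtain ⟨τ0, hτ0⟩ := Module.projective_lifting_property (g'.rangeRestrict)
      (LinearMap.codRestrict (LinearMap.range g') d0
        (fun x => LinearMap.mem_range.mpr ((Hgrange (d0 x)).mpr ⟨x, rfl⟩)))
      (LinearMap.surjective_rangeRestrict _)
    refine ⟨τ0, LinearMap.ext fun x => ?_⟩
    have h2 := congrArg Subtype.val (DFunLike.congr_fun hτ0 x)
    simpa using h2
  have Hτ : ∀ x, g' (τ x) = d0 x := fun x => DFunLike.congr_fun Hτmap x
  -- normalized exactness facts
  have hK0 : ∀ y : Qc 1, d0 y = 0 ↔ ∃ x : Qc 2, d1 x = y := fun y => hQex 0 y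
  have hK1 : ∀ y : Qc 2, d1 y = 0 ↔ ∃ x : Qc 3, d2 x = y := fun y => hQex 1 y
  have hK2 : ∀ y : Qc 3, d2 y = 0 ↔ ∃ x : Qc 4, d3 x = y := fun y => hQex 2 y
  have hK3 : ∀ y : Qc 4, d3 y = 0 ↔ ∃ x : Qc 5, d4 x = y := fun y => hQex 3 y
  have hK_1 : ∀ y : Qc 0, dm1 y = 0 ↔ ∃ x : Qc 1, d0 x = y := fun y => hQex (Int.negSucc 0) y
  have Hc0 : ∀ y : Qc 2, d0 (d1 y) = 0 := fun y => (hK0 _).mpr ⟨y, rfl⟩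
  have Hc1 : ∀ y : Qc 3, d1 (d2 y) = 0 := fun y => (hK1 _).mpr ⟨y, rfl⟩
  have Hc2 : ∀ y : Qc 4, d2 (d3 y) = 0 := fun y => (hK2 _).mpr ⟨y, rfl⟩
  have Hc3 : ∀ y : Qc 5, d3 (d4 y) = 0 := fun y => (hK3 _).mpr ⟨y, rfl⟩
  have Hd1add : ∀ a b : Qc 2, d1 (a + b) = d1 a + d1 b := fun a b => map_add _ a b
  have Hd1neg : ∀ a : Qc 2, d1 (-a) = -(d1 a) := fun a => map_neg _ a
  have Hd1sub : ∀ a b : Qc 2, d1 (a - b) = d1 a - d1 b := fun a b => map_sub _ a b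
  -- a lift `η` with `d1 ∘ η = id - h ∘ τ`
  obtain ⟨η, Hηmap⟩ : ∃ η : Qc 1 →ₗ[R] Qc 2, d1 ∘ₗ η = LinearMap.id - h ∘ₗ τ := by
    haveI := hQproj 1
    obtain ⟨η0, hη0⟩ := Module.projective_lifting_property ((d 1).rangeRestrict)
      (LinearMap.codRestrict (LinearMap.range (d 1)) (LinearMap.id - h ∘ₗ τ)
        (fun x => by
          have hz : d0 (x - h (τ x)) = 0 := by
            rw [map_sub, Hh (τ x), Hτ x, sub_self]
          obtain ⟨z, hzz⟩ := (hK0 _).mp hz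
          exact LinearMap.mem_range.mpr ⟨z, hzz⟩))
      (LinearMap.surjective_rangeRestrict _)
    refine ⟨η0, LinearMap.ext fun x => ?_⟩
    have h2 := congrArg Subtype.val (DFunLike.congr_fun hη0 x)
    simpa using h2
  have Hη : ∀ x, d1 (η x) = x - h (τ x) := fun x => by
    have h2 := DFunLike.congr_fun Hηmap x
    simpa using h2
  -- the three special differentials
  set E0 : Qc 2 × P →ₗ[R] P :=
    LinearMap.snd R (Qc 2) P
      - τ ∘ₗ (d1 ∘ₗ LinearMap.fst R (Qc 2) P + h ∘ₗ LinearMap.snd R (Qc 2) P) with hE0def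
  set E1 : Qc 3 × Qc 1 →ₗ[R] Qc 2 × P :=
    LinearMap.prod
      (d2 ∘ₗ LinearMap.fst R (Qc 3) (Qc 1) + η ∘ₗ LinearMap.snd R (Qc 3) (Qc 1))
      (τ ∘ₗ LinearMap.snd R (Qc 3) (Qc 1)) with hE1def
  set E2 : Qc 4 →ₗ[R] Qc 3 × Qc 1 := LinearMap.prod d3 0 with hE2def
  have E0app : ∀ (y : Qc 2) (p : P), E0 (y, p) = p - τ (d1 y + h p) := fun y p => rfl
  have E1app : ∀ (z : Qc 3) (x : Qc 1), E1 (z, x) = (d2 z + η x, τ x) := fun z x => rfl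
  have E2app : ∀ w : Qc 4, E2 w = (d3 w, 0) := fun w => rfl
  -- untensored exactness at the special spots
  have keyS0 : Function.Exact ⇑E0 ⇑g' := by
    intro p
    constructor
    · intro hp
      have h1 : d0 (h p) = 0 := by rw [Hh p, hp]
      obtain ⟨y, hy⟩ := (hK0 (h p)).mp h1
      refine ⟨(-y, p), ?_⟩
      rw [E0app, Hd1neg, hy]
      simp
    · rintro ⟨⟨y, p⟩, rfl⟩
      rw [E0app, map_sub, map_add τ (d1 y) (h p), map_add g' (τ (d1 y)) (τ (h p)),
        Hτ (d1 y), Hτ (h p), Hc0, zero_add, Hh, sub_self]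
  have keyS1 : Function.Exact ⇑E1 ⇑E0 := by
    intro v
    constructor
    · intro h0
      obtain ⟨y, p⟩ := v
      rw [E0app] at h0
      have hp : p = τ (d1 y + h p) := sub_eq_zero.mp h0
      have hyu : d1 (y - η (d1 y + h p)) = 0 := by
        rw [Hd1sub, Hη (d1 y + h p), ← hp]
        abel
      obtain ⟨z, hz⟩ := (hK1 _).mp hyu
      refine ⟨(z, d1 y + h p), ?_⟩
      rw [E1app, hz]
      refine Prod.ext ?_ hp.symm
      show y - η (d1 y + h p) + η (d1 y + h p) = y
      abel
    · rintro ⟨⟨z, x⟩, rfl⟩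
      rw [E1app, E0app, map_add τ (d1 (d2 z + η x)) (h (τ x)), Hd1add, Hc1, Hη, zero_add,
        map_sub τ x (h (τ x))]
      abel
  have keyS2 : Function.Exact ⇑E2 ⇑E1 := by
    intro v
    constructor
    · intro h0
      obtain ⟨z, x⟩ := v
      rw [E1app] at h0
      have h1 : d2 z + η x = 0 := congrArg Prod.fst h0
      have h2 : τ x = 0 := congrArg Prod.snd h0
      have hx : x = 0 := by
        have h3 := congrArg (⇑d1) h1
        simp only [Hd1add, Hc1, Hη, zero_add, h2, map_zero, sub_zero] at h3
        exact h3
      have hz0 : d2 z = 0 := by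
        rw [hx, map_zero, add_zero] at h1
        exact h1
      obtain ⟨w, hw⟩ := (hK2 z).mp hz0
      refine ⟨w, ?_⟩
      rw [E2app, hx, hw]
    · rintro ⟨w, rfl⟩
      rw [E2app, E1app, Hc2, map_zero, add_zero, map_zero]
      rfl
  have keyS3 : Function.Exact ⇑d4 ⇑E2 := by
    intro w
    constructor
    · intro h0
      have h1 : d3 w = 0 := by
        have := congrArg Prod.fst h0
        rwa [E2app] at this
      exact (hK3 w).mp h1
    · rintro ⟨x, rfl⟩
      rw [E2app, Hc3]
      rfl
  have keyS_1 : Function.Exact ⇑g' ⇑dm1 := by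
    intro c
    constructor
    · intro h0
      obtain ⟨x, hx⟩ := (hK_1 c).mp h0
      exact ⟨τ x, by rw [Hτ, hx]⟩
    · rintro ⟨p, rfl⟩
      exact (hK_1 (g' p)).mpr ⟨h p, Hh p⟩
  -- composite identities (for the tensored chases)
  have hM0 : g' ∘ₗ E0 = 0 := by
    apply LinearMap.ext; rintro ⟨y, p⟩
    show g' (E0 (y, p)) = 0
    rw [E0app, map_sub, map_add τ (d1 y) (h p), map_add g' (τ (d1 y)) (τ (h p)),
      Hτ (d1 y), Hτ (h p), Hc0, zero_add, Hh, sub_self]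
  have hM1 : E0 ∘ₗ E1 = 0 := by
    apply LinearMap.ext; rintro ⟨z, x⟩
    show E0 (E1 (z, x)) = 0
    rw [E1app, E0app, map_add τ (d1 (d2 z + η x)) (h (τ x)), Hd1add, Hc1, Hη, zero_add,
      map_sub τ x (h (τ x))]
    show τ x - (τ x - τ (h (τ x)) + τ (h (τ x))) = 0
    abel
  have hM2 : E1 ∘ₗ E2 = 0 := by
    apply LinearMap.ext; intro w
    show E1 (E2 w) = 0
    rw [E2app, E1app, Hc2, map_zero, add_zero, map_zero]
    rfl
  have hM3 : E2 ∘ₗ d4 = 0 := by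
    apply LinearMap.ext; intro x
    show E2 (d4 x) = 0
    rw [E2app, Hc3]
    rfl
  have hMg : dm1 ∘ₗ g' = 0 := by
    apply LinearMap.ext; intro p
    exact (hK_1 (g' p)).mpr ⟨h p, Hh p⟩
  have hA1 : E0 ∘ₗ LinearMap.inl R (Qc 2) P = -(τ ∘ₗ d1) := by
    apply LinearMap.ext; intro y
    show E0 (y, 0) = -(τ (d1 y))
    rw [E0app, map_zero, add_zero]
    abel
  have hA2 : E0 ∘ₗ LinearMap.inr R (Qc 2) P = LinearMap.id - τ ∘ₗ h := by
    apply LinearMap.ext; intro p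
    show E0 (0, p) = p - τ (h p)
    rw [E0app, map_zero, zero_add]
  have hB1 : E1 ∘ₗ LinearMap.inl R (Qc 3) (Qc 1) = LinearMap.inl R (Qc 2) P ∘ₗ d2 := by
    apply LinearMap.ext; intro z
    show E1 (z, 0) = (d2 z, 0)
    rw [E1app, map_zero, add_zero, map_zero]
  have hB2 : E1 ∘ₗ LinearMap.inr R (Qc 3) (Qc 1)
      = LinearMap.inl R (Qc 2) P ∘ₗ η + LinearMap.inr R (Qc 2) P ∘ₗ τ := by
    apply LinearMap.ext; intro x
    show E1 (0, x) = ((η x, 0) : Qc 2 × P) + (0, τ x)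
    rw [E1app, map_zero, zero_add]
    simp
  have hE2c : E2 = LinearMap.inl R (Qc 3) (Qc 1) ∘ₗ d3 := by
    apply LinearMap.ext; intro w
    rw [E2app]
    rfl
  -- the range of E0 is (isomorphic to) M
  have hrange : LinearMap.range E0 = LinearMap.range f := by
    ext p
    simp only [LinearMap.mem_range]
    constructor
    · rintro ⟨v, rfl⟩
      have hg0 : g' (E0 v) = 0 := DFunLike.congr_fun hM0 v
      exact (hfg (E0 v)).mp ((Hgker _).mp hg0)
    · rintro ⟨m, rfl⟩
      have hgm : g' (f m) = 0 := (Hgker _).mpr (hfg.apply_apply_eq_zero m)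
      exact (keyS0 (f m)).mp hgm
  -- conversion equations for the spliced complex
  have hc00 : auxE Qc d P g' h τ η (Int.ofNat 0) = E0 := rfl
  have hcz : auxE Qc d P g' h τ η 0 = E0 := rfl
  have hc01 : auxE Qc d P g' h τ η (Int.ofNat 0 + 1) = E1 := rfl
  have hc11 : auxE Qc d P g' h τ η (Int.ofNat 1) = E1 := rfl
  have hc12 : auxE Qc d P g' h τ η (Int.ofNat 1 + 1) = E2 := rfl
  have hc22 : auxE Qc d P g' h τ η (Int.ofNat 2) = E2 := rfl
  have hc23 : auxE Qc d P g' h τ η (Int.ofNat 2 + 1) = d4 := rfl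
  have hcn0 : auxE Qc d P g' h τ η (Int.negSucc 0) = g' := rfl
  have hcn01 : auxE Qc d P g' h τ η (Int.negSucc 0 + 1) = E0 := rfl
  have hcn1 : auxE Qc d P g' h τ η (Int.negSucc 1) = dm1 := rfl
  have hcn10 : auxE Qc d P g' h τ η (Int.negSucc 1 + 1) = g' := rfl
  refine ⟨auxD Qc P, auxE Qc d P g' h τ η, ?_, ?_, ?_, ?_⟩
  · intro i
    rcases i with n | n
    · rcases n with _ | _ | _ | n
      · exact hP
      · haveI := hQproj 2
        exact inferInstanceAs (Module.Projective R ((Qc 2) × P))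
      · haveI := hQproj 3; haveI := hQproj 1
        exact inferInstanceAs (Module.Projective R ((Qc 3) × (Qc 1)))
      · exact hQproj (Int.ofNat (n+3) + 1)
    · exact hQproj (Int.negSucc n + 1)
  · intro i
    rcases i with n | n
    · rcases n with _ | _ | _ | n
      · rw [hc01, hc00]; exact keyS1
      · rw [hc12, hc11]; exact keyS2
      · rw [hc23, hc22]; exact keyS3
      · exact hQex (Int.ofNat (n+3) + 1)
    · rcases n with _ | _ | n
      · rw [hcn01, hcn0]; exact keyS0
      · rw [hcn10, hcn1]; exact keyS_1
      · exact hQex (Int.negSucc (n+2) + 1)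
  · rw [hcz]
    exact ⟨(LinearEquiv.ofEq _ _ hrange).trans (LinearEquiv.ofInjective f hf).symm⟩
  · intro I hI
    have tK0 : ∀ v : TensorProduct R I (Qc 1), d0.lTensor I v = 0 ↔
        ∃ w : TensorProduct R I (Qc 2), d1.lTensor I w = v := fun v => hQtens I hI 0 v
    have tK1 : ∀ v : TensorProduct R I (Qc 2), d1.lTensor I v = 0 ↔
        ∃ w : TensorProduct R I (Qc 3), d2.lTensor I w = v := fun v => hQtens I hI 1 v
    have tK2 : ∀ v : TensorProduct R I (Qc 3), d2.lTensor I v = 0 ↔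
        ∃ w : TensorProduct R I (Qc 4), d3.lTensor I w = v := fun v => hQtens I hI 2 v
    have tK3 : ∀ v : TensorProduct R I (Qc 4), d3.lTensor I v = 0 ↔
        ∃ w : TensorProduct R I (Qc 5), d4.lTensor I w = v := fun v => hQtens I hI 3 v
    have tK_1 : ∀ v : TensorProduct R I (Qc 0), dm1.lTensor I v = 0 ↔
        ∃ w : TensorProduct R I (Qc 1), d0.lTensor I w = v :=
      fun v => hQtens I hI (Int.negSucc 0) v
    have tS0 : Function.Exact ⇑(E0.lTensor I) ⇑(g'.lTensor I) := by
      intro w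
      constructor
      · intro hw
        have h1 : d0.lTensor I (h.lTensor I w) = 0 := by
          rw [← ltc d0 h w, Hhmap, hw]
        obtain ⟨u, hu⟩ := (tK0 _).mp h1
        refine ⟨(LinearMap.inr R (Qc 2) P).lTensor I w
          - (LinearMap.inl R (Qc 2) P).lTensor I u, ?_⟩
        rw [map_sub, ← ltc E0 (LinearMap.inr R (Qc 2) P) w, ← ltc E0 (LinearMap.inl R (Qc 2) P) u,
          hA1, hA2, LinearMap.lTensor_neg, LinearMap.lTensor_sub, LinearMap.lTensor_id]
        simp only [LinearMap.sub_apply, LinearMap.neg_apply, LinearMap.id_coe, id_eq]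
        rw [ltc τ d1 u, hu, ltc τ h w]
        abel
      · rintro ⟨v, rfl⟩
        rw [← ltc g' E0 v, hM0, LinearMap.lTensor_zero]
        rfl
    have tS1 : Function.Exact ⇑(E1.lTensor I) ⇑(E0.lTensor I) := by
      intro v
      constructor
      · intro hv
        have hdec := tdecomp (I := I) (A := Qc 2) (B := P) v
        set a := (LinearMap.fst R (Qc 2) P).lTensor I v with ha
        set b := (LinearMap.snd R (Qc 2) P).lTensor I v with hbdef
        have hv' : E0.lTensor I ((LinearMap.inl R (Qc 2) P).lTensor I a
            + (LinearMap.inr R (Qc 2) P).lTensor I b) = 0 := by rw [← hdec]; exact hv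
        rw [map_add, ← ltc E0 (LinearMap.inl R (Qc 2) P) a, ← ltc E0 (LinearMap.inr R (Qc 2) P) b,
          hA1, hA2, LinearMap.lTensor_neg, LinearMap.lTensor_sub, LinearMap.lTensor_id] at hv'
        simp only [LinearMap.sub_apply, LinearMap.neg_apply, LinearMap.id_coe, id_eq] at hv'
        rw [ltc τ d1 a, ltc τ h b] at hv'
        have hb : b = τ.lTensor I (d1.lTensor I a + h.lTensor I b) := by
          rw [map_add]
          have h4 : b - (τ.lTensor I (d1.lTensor I a) + τ.lTensor I (h.lTensor I b)) = 0 := by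
            rw [← hv']; abel
          exact sub_eq_zero.mp h4
        have hker : d1.lTensor I (a - η.lTensor I (d1.lTensor I a + h.lTensor I b)) = 0 := by
          rw [map_sub, ← ltc d1 η (d1.lTensor I a + h.lTensor I b), Hηmap,
            LinearMap.lTensor_sub, LinearMap.lTensor_id]
          simp only [LinearMap.sub_apply, LinearMap.id_coe, id_eq]
          rw [ltc h τ (d1.lTensor I a + h.lTensor I b), ← hb]
          abel
        obtain ⟨c, hc⟩ := (tK1 _).mp hker
        refine ⟨(LinearMap.inl R (Qc 3) (Qc 1)).lTensor I c
          + (LinearMap.inr R (Qc 3) (Qc 1)).lTensor I (d1.lTensor I a + h.lTensor I b), ?_⟩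
        rw [map_add, ← ltc E1 (LinearMap.inl R (Qc 3) (Qc 1)) c,
          ← ltc E1 (LinearMap.inr R (Qc 3) (Qc 1)) (d1.lTensor I a + h.lTensor I b), hB1, hB2]
        rw [ltc (LinearMap.inl R (Qc 2) P) d2 c, hc]
        rw [LinearMap.lTensor_add, LinearMap.add_apply, ltc (LinearMap.inl R (Qc 2) P) η,
          ltc (LinearMap.inr R (Qc 2) P) τ, ← hb]
        rw [map_sub]
        conv_rhs => rw [hdec]
        abel
      · rintro ⟨v', rfl⟩
        rw [← ltc E0 E1 v', hM1, LinearMap.lTensor_zero]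
        rfl
    have tS2 : Function.Exact ⇑(E2.lTensor I) ⇑(E1.lTensor I) := by
      intro v
      constructor
      · intro hv
        have hdec := tdecomp (I := I) (A := Qc 3) (B := Qc 1) v
        set c := (LinearMap.fst R (Qc 3) (Qc 1)).lTensor I v with hcdef
        set x := (LinearMap.snd R (Qc 3) (Qc 1)).lTensor I v with hxdef
        have hv' : E1.lTensor I ((LinearMap.inl R (Qc 3) (Qc 1)).lTensor I c
            + (LinearMap.inr R (Qc 3) (Qc 1)).lTensor I x) = 0 := by rw [← hdec]; exact hv
        rw [map_add, ← ltc E1 (LinearMap.inl R (Qc 3) (Qc 1)) c,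
          ← ltc E1 (LinearMap.inr R (Qc 3) (Qc 1)) x, hB1, hB2,
          ltc (LinearMap.inl R (Qc 2) P) d2 c, LinearMap.lTensor_add, LinearMap.add_apply,
          ltc (LinearMap.inl R (Qc 2) P) η x, ltc (LinearMap.inr R (Qc 2) P) τ x] at hv'
        have h1 : d2.lTensor I c + η.lTensor I x = 0 := by
          have h5 := congrArg ((LinearMap.fst R (Qc 2) P).lTensor I) hv'
          rw [map_add, map_add, tfst_inl, tfst_inl, tfst_inr, map_zero, add_zero] at h5
          exact h5
        have h2 : τ.lTensor I x = 0 := by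
          have h5 := congrArg ((LinearMap.snd R (Qc 2) P).lTensor I) hv'
          rw [map_add, map_add, tsnd_inl, tsnd_inl, tsnd_inr, map_zero, zero_add, zero_add] at h5
          exact h5
        have hx : x = 0 := by
          have h5 := congrArg (d1.lTensor I) h1
          rw [map_add, ← ltc d1 d2 c, ← ltc d1 η x, Hηmap, map_zero] at h5
          have hz12 : d1 ∘ₗ d2 = 0 := LinearMap.ext fun z => Hc1 z
          rw [hz12, LinearMap.lTensor_zero, LinearMap.lTensor_sub, LinearMap.lTensor_id] at h5
          simp only [LinearMap.zero_apply, LinearMap.sub_apply, LinearMap.id_coe, id_eq,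
            zero_add] at h5
          rw [ltc h τ x, h2, map_zero, sub_zero] at h5
          exact h5
        have hc0 : d2.lTensor I c = 0 := by
          rw [hx, map_zero, add_zero] at h1
          exact h1
        obtain ⟨w, hw⟩ := (tK2 _).mp hc0
        refine ⟨w, ?_⟩
        rw [hE2c, ltc (LinearMap.inl R (Qc 3) (Qc 1)) d3 w, hw, hdec, hx, map_zero,
          add_zero]
      · rintro ⟨w, rfl⟩
        rw [← ltc E1 E2 w, hM2, LinearMap.lTensor_zero]
        rfl
    have tS3 : Function.Exact ⇑(d4.lTensor I) ⇑(E2.lTensor I) := by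
      intro w
      constructor
      · intro hw
        rw [hE2c, ltc (LinearMap.inl R (Qc 3) (Qc 1)) d3 w] at hw
        have h1 : d3.lTensor I w = 0 := by
          have h5 := congrArg ((LinearMap.fst R (Qc 3) (Qc 1)).lTensor I) hw
          rwa [tfst_inl, map_zero] at h5
        exact (tK3 w).mp h1
      · rintro ⟨x, rfl⟩
        rw [← ltc E2 d4 x, hM3, LinearMap.lTensor_zero]
        rfl
    have tS_1 : Function.Exact ⇑(g'.lTensor I) ⇑(dm1.lTensor I) := by
      intro c
      constructor
      · intro hc
        obtain ⟨x, hx⟩ := (tK_1 c).mp hc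
        exact ⟨τ.lTensor I x, by rw [← ltc g' τ x, Hτmap, hx]⟩
      · rintro ⟨p, rfl⟩
        rw [← ltc dm1 g' p, hMg, LinearMap.lTensor_zero]
        rfl
    intro i
    rcases i with n | n
    · rcases n with _ | _ | _ | n
      · rw [hc01]
        rw [hc00]
        exact tS1
      · rw [hc12]
        rw [hc11]
        exact tS2
      · rw [hc23]
        rw [hc22]
        exact tS3
      · have e1 : auxE Qc d P g' h τ η (Int.ofNat (n+3) + 1)
            = d (Int.ofNat (n+3) + 1 + 1) := rfl
        have e2 : auxE Qc d P g' h τ η (Int.ofNat (n+3)) = d (Int.ofNat (n+3) + 1) := rfl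
        rw [e1, e2]
        exact hQtens I hI (Int.ofNat (n+3) + 1)
    · rcases n with _ | _ | n
      · rw [hcn01]
        rw [hcn0]
        exact tS0
      · rw [hcn10]
        rw [hcn1]
        exact tS_1
      · have e1 : auxE Qc d P g' h τ η (Int.negSucc (n+2) + 1)
            = d (Int.negSucc (n+2) + 1 + 1) := rfl
        have e2 : auxE Qc d P g' h τ η (Int.negSucc (n+2)) = d (Int.negSucc (n+2) + 1) := rfl
        rw [e1, e2]
        exact hQtens I hI (Int.negSucc (n+2) + 1)
end

section
/- An R-module M is PGF if and only if (i) there exists an exact sequence 0 → M → P⁰ → P¹ → ⋯ with each Pⁱ projective such that I ⊗_R − preserves its exactness for every injective module I, and (ii) Torᵢ^R(I, M) = 0 for every i > 0 and every injective module I. -/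
open CategoryTheory

universe u

variable (R : Type u) [CommRing R]

section PGFAux

open MonoidalCategory

variable {R}

/-! ### Generic exactness helper lemmas -/

section ExactHelpers
variable {A B C D : Type u} [AddCommGroup A] [AddCommGroup B] [AddCommGroup C] [AddCommGroup D]
  [Module R A] [Module R B] [Module R C] [Module R D]

lemma exact_inj_comp_iff {u : A →ₗ[R] B} {v : B →ₗ[R] C} {w : C →ₗ[R] D}
    (hw : Function.Injective w) :
    Function.Exact u (w ∘ₗ v) ↔ Function.Exact u v := by
  have h0 : ∀ y, (w ∘ₗ v) y = 0 ↔ v y = 0 := fun y => by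
    rw [LinearMap.comp_apply, ← map_zero w, hw.eq_iff]
  constructor <;> intro h y
  · rw [← h0 y]; exact h y
  · rw [h0 y]; exact h y

lemma exact_comp_surj_iff {u : A →ₗ[R] B} {v : B →ₗ[R] C} {w : C →ₗ[R] D}
    (hu : Function.Surjective u) :
    Function.Exact (v ∘ₗ u) w ↔ Function.Exact v w := by
  constructor <;> intro h y <;> rw [h y]
  · constructor
    · rintro ⟨x, rfl⟩; exact ⟨u x, rfl⟩
    · rintro ⟨b, rfl⟩
      obtain ⟨x, rfl⟩ := hu b
      exact ⟨x, rfl⟩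
  · constructor
    · rintro ⟨b, rfl⟩
      obtain ⟨x, rfl⟩ := hu b
      exact ⟨x, rfl⟩
    · rintro ⟨x, rfl⟩; exact ⟨u x, rfl⟩

end ExactHelpers

/-! ### Building a projective resolution from explicit data -/

section Res
variable (M : ModuleCat.{u} R) (F : ℕ → ModuleCat.{u} R)
  (d : ∀ i, F (i+1) →ₗ[R] F i) (p : F 0 →ₗ[R] M)

noncomputable def resComplex (hex : ∀ i, Function.Exact (d (i+1)) (d i)) :
    ChainComplex (ModuleCat.{u} R) ℕ :=
  ChainComplex.of F (fun i => (ModuleCat.ofHom (d i) : F (i+1) ⟶ F i))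
    (fun i => ModuleCat.hom_ext (LinearMap.ext fun x => (hex i).apply_apply_eq_zero x))

variable (hex : ∀ i, Function.Exact (d (i+1)) (d i))

@[simp] lemma resComplex_X (n : ℕ) : (resComplex F d hex).X n = F n := rfl

@[simp] lemma resComplex_d (n : ℕ) :
    (resComplex F d hex).d (n+1) n = (ModuleCat.ofHom (d n) : F (n+1) ⟶ F n) :=
  ChainComplex.of_d F (fun i => (ModuleCat.ofHom (d i) : F (i+1) ⟶ F i)) n

noncomputable def resResolution (hproj : ∀ i, Module.Projective R (F i))
    (hsurj : Function.Surjective p)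
    (h0 : Function.Exact (d 0) p) : ProjectiveResolution M where
  complex := resComplex F d hex
  projective n := by
    have : Module.Projective R ((resComplex F d hex).X n) := hproj n
    exact (IsProjective.iff_projective _).mp this
  π := (ChainComplex.toSingle₀Equiv _ _).symm ⟨(ModuleCat.ofHom p : F 0 ⟶ M), by
    rw [resComplex_d]
    exact ModuleCat.hom_ext (LinearMap.ext fun x => h0.apply_apply_eq_zero x)⟩
  quasiIso := ⟨fun n => by
    cases n with
    | zero =>
      rw [ChainComplex.quasiIsoAt₀_iff, ShortComplex.quasiIso_iff_of_zeros']
      · constructor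
        · rw [ShortComplex.moduleCat_exact_iff]
          intro (x : F 0) hx
          have hx' : p x = 0 := by
            exact hx
          obtain ⟨y, hy⟩ := (h0 x).mp hx'
          exact ⟨y, by simpa using congrArg (fun (f : F 1 ⟶ F 0) => f y) (resComplex_d F d hex 0) ▸ hy⟩
        · rw [ModuleCat.epi_iff_surjective]
          intro x
          obtain ⟨y, hy⟩ := hsurj x
          exact ⟨y, hy⟩
      all_goals rfl
    | succ n =>
      rw [quasiIsoAt_iff_exactAt']
      · rw [HomologicalComplex.exactAt_iff' _ (n+2) (n+1) n (by simp) (by simp),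
          ShortComplex.moduleCat_exact_iff]
        intro (x : F (n+1)) hx
        have hx' : d n x = 0 := by
          simpa using congrArg (fun (f : F (n+1) ⟶ F n) => f x) (resComplex_d F d hex n) ▸ hx
        obtain ⟨y, hy⟩ := (hex n x).mp hx'
        exact ⟨y, by simpa using congrArg (fun (f : F (n+2) ⟶ F (n+1)) => f y) (resComplex_d F d hex (n+1)) ▸ hy⟩
      · apply ChainComplex.exactAt_succ_single_obj⟩

include hex in
lemma tor_succ_subsingleton_iff (hproj : ∀ i, Module.Projective R (F i))
    (hsurj : Function.Surjective p) (h0 : Function.Exact (d 0) p)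
    (I : ModuleCat.{u} R) (n : ℕ) :
    Subsingleton (torM R (n+1) I M) ↔
      Function.Exact ((d (n+1)).lTensor I) ((d n).lTensor I) := by
  let res := resResolution M F d p hex hproj hsurj h0
  let T := ((((tensoringLeft (ModuleCat.{u} R)).obj I).mapHomologicalComplex _).obj res.complex)
  have iso : torM R (n+1) I M ≅ T.homology (n+1) := res.isoLeftDerivedObj _ (n+1)
  have hzero : Subsingleton (torM R (n+1) I M) ↔ Limits.IsZero (T.homology (n+1)) := by
    constructor
    · intro h
      exact (ModuleCat.isZero_of_subsingleton _).of_iso iso.symm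
    · intro h
      have h1 : (𝟙 (torM R (n+1) I M)) = 0 := by
        have := (h.of_iso iso).eq_of_src (𝟙 _) 0
        exact this
      have ha : ∀ x : torM R (n+1) I M, x = 0 := by
        intro x
        calc x = (𝟙 (torM R (n+1) I M)) x := rfl
          _ = (0 : torM R (n+1) I M ⟶ torM R (n+1) I M) x := by rw [h1]
          _ = 0 := rfl
      exact ⟨fun a b => (ha a).trans (ha b).symm⟩
  rw [hzero, ← HomologicalComplex.exactAt_iff_isZero_homology,
    HomologicalComplex.exactAt_iff' _ (n+2) (n+1) n (by simp) (by simp),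
    ShortComplex.moduleCat_exact_iff]
  have hf : ∀ x, (T.sc' (n+2) (n+1) n).f x = (d (n+1)).lTensor I x := by
    intro x
    have : T.d (n+2) (n+1) = (ModuleCat.ofHom ((res.complex.d (n+2) (n+1)).hom.lTensor I) : T.X (n+2) ⟶ T.X (n+1)) := rfl
    rw [show (T.sc' (n+2) (n+1) n).f = T.d (n+2) (n+1) from rfl, this,
      show (res.complex.d (n+2) (n+1)).hom = d (n+1) from congrArg ModuleCat.Hom.hom (resComplex_d F d hex (n+1))]
    rfl
  have hg : ∀ x, (T.sc' (n+2) (n+1) n).g x = (d n).lTensor I x := by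
    intro x
    have : T.d (n+1) n = (ModuleCat.ofHom ((res.complex.d (n+1) n).hom.lTensor I) : T.X (n+1) ⟶ T.X n) := rfl
    rw [show (T.sc' (n+2) (n+1) n).g = T.d (n+1) n from rfl, this,
      show (res.complex.d (n+1) n).hom = d n from congrArg ModuleCat.Hom.hom (resComplex_d F d hex n)]
    rfl
  constructor
  · intro h y
    constructor
    · intro hy
      obtain ⟨x, hx⟩ := h y ((hg y).trans hy)
      exact ⟨x, (hf x).symm.trans hx⟩
    · rintro ⟨x, rfl⟩
      have : (d n).lTensor I ∘ₗ (d (n+1)).lTensor I = 0 := by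
        rw [← LinearMap.lTensor_comp]
        rw [show (d n) ∘ₗ (d (n+1)) = 0 from LinearMap.ext fun x => (hex n).apply_apply_eq_zero x]
        exact LinearMap.lTensor_zero I
      exact congrArg (fun f : _ →ₗ[R] _ => f x) this
  · intro h y hy
    obtain ⟨x, hx⟩ := (h y).mp (by rw [← hg y]; exact hy)
    exact ⟨x, (hf x).trans hx⟩

end Res

/-! ### A free resolution of an arbitrary module -/

noncomputable def freeCover (N : ModuleCat.{u} R) : ModuleCat.of R (N →₀ R) →ₗ[R] N :=
  Finsupp.linearCombination R id

lemma freeCover_surjective (N : ModuleCat.{u} R) : Function.Surjective (freeCover N) := by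
  rw [← LinearMap.range_eq_top, freeCover, Finsupp.range_linearCombination]
  simp

noncomputable def Kmod (M : ModuleCat.{u} R) : ℕ → ModuleCat.{u} R
  | 0 => M
  | (i+1) => ModuleCat.of R (LinearMap.ker (freeCover (Kmod M i)))

noncomputable def Fmod (M : ModuleCat.{u} R) (i : ℕ) : ModuleCat.{u} R :=
  ModuleCat.of R (Kmod M i →₀ R)

noncomputable def dmod (M : ModuleCat.{u} R) (i : ℕ) : Fmod M (i+1) →ₗ[R] Fmod M i :=
  (LinearMap.ker (freeCover (Kmod M i))).subtype ∘ₗ freeCover (Kmod M (i+1))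

lemma fmod_projective (M : ModuleCat.{u} R) (i : ℕ) : Module.Projective R (Fmod M i) :=
  inferInstanceAs (Module.Projective R (Kmod M i →₀ R))

noncomputable def pmod (M : ModuleCat.{u} R) : Fmod M 0 →ₗ[R] M := freeCover M

lemma pmod_surjective (M : ModuleCat.{u} R) : Function.Surjective (pmod M) :=
  freeCover_surjective M

lemma exact_d0_pmod (M : ModuleCat.{u} R) : Function.Exact (dmod M 0) (pmod M) := by
  intro y
  constructor
  · intro hy
    obtain ⟨x, hx⟩ := freeCover_surjective (Kmod M 1) ⟨y, hy⟩
    refine ⟨x, ?_⟩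
    show (LinearMap.ker (freeCover (Kmod M 0))).subtype ((freeCover (Kmod M 1)) x) = y
    rw [hx]; rfl
  · rintro ⟨x, rfl⟩
    exact LinearMap.mem_ker.mp ((freeCover (Kmod M 1)) x).2

lemma exact_dmod (M : ModuleCat.{u} R) (i : ℕ) :
    Function.Exact (dmod M (i+1)) (dmod M i) := by
  intro y
  constructor
  · intro hy
    have hy' : freeCover (Kmod M (i+1)) y = 0 := Subtype.ext hy
    obtain ⟨x, hx⟩ := freeCover_surjective (Kmod M (i+2)) ⟨y, hy'⟩
    refine ⟨x, ?_⟩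
    show (LinearMap.ker (freeCover (Kmod M (i+1)))).subtype ((freeCover (Kmod M (i+2))) x) = y
    rw [hx]; rfl
  · rintro ⟨x, rfl⟩
    show (LinearMap.ker (freeCover (Kmod M i))).subtype
      (freeCover (Kmod M (i+1)) ((LinearMap.ker (freeCover (Kmod M (i+1)))).subtype ((freeCover (Kmod M (i+2))) x))) = 0
    exact (congrArg (LinearMap.ker (freeCover (Kmod M i))).subtype
      (LinearMap.mem_ker.mp ((freeCover (Kmod M (i+2))) x).2)).trans (map_zero _)

/-! ### Splicing data for the backward direction -/

section Splice
variable (M : ModuleCat.{u} R) (Pr : ℕ → ModuleCat.{u} R)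
  (f : M →ₗ[R] Pr 0) (ds : ∀ i, Pr i →ₗ[R] Pr (i+1))

noncomputable def PZ : ℤ → ModuleCat.{u} R
  | Int.ofNat 0 => Pr 0
  | Int.ofNat (n+1) => Fmod M n
  | Int.negSucc n => Pr (n+1)

noncomputable def dZ : ∀ i : ℤ, PZ M Pr (i+1) →ₗ[R] PZ M Pr i
  | Int.ofNat 0 => f ∘ₗ pmod M
  | Int.ofNat (n+1) => dmod M n
  | Int.negSucc 0 => ds 0
  | Int.negSucc (n+1) => ds (n+1)

end Splice

/-! ### Re-indexing data for the forward direction -/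

section Fwd
variable (P : ℤ → ModuleCat.{u} R) (d : ∀ i : ℤ, P (i+1) →ₗ[R] P i)

def QN : ℕ → ModuleCat.{u} R
  | 0 => P 0
  | (j+1) => P (Int.negSucc j)

noncomputable def DN : ∀ i : ℕ, QN P i →ₗ[R] QN P (i+1)
  | 0 => d (Int.negSucc 0)
  | (j+1) => d (Int.negSucc (j+1))

end Fwd

end PGFAux

theorem stmt1 (M : ModuleCat.{u} R) :
    IsPGF R M ↔
      ((∃ (P : ℕ → ModuleCat.{u} R) (f : M →ₗ[R] P 0) (d : (i : ℕ) → P i →ₗ[R] P (i + 1)),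
          (∀ i, Module.Projective R (P i)) ∧
          Function.Injective f ∧ Function.Exact f (d 0) ∧
          (∀ i, Function.Exact (d i) (d (i + 1))) ∧
          (∀ (I : ModuleCat.{u} R), Module.Injective R I →
            Function.Injective (f.lTensor I) ∧
            Function.Exact (f.lTensor I) ((d 0).lTensor I) ∧
            ∀ i, Function.Exact ((d i).lTensor I) ((d (i + 1)).lTensor I))) ∧
        (∀ i : ℕ, 0 < i → ∀ (I : ModuleCat.{u} R), Module.Injective R I →
          Subsingleton (torM R i I M))) := by
  constructor
  · rintro ⟨P, d, hproj, hex, ⟨e⟩, htens⟩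
    set fM : M →ₗ[R] P 0 := (LinearMap.range (d 0)).subtype ∘ₗ e.symm.toLinearMap with hfM
    set q : P ((0:ℤ)+1) →ₗ[R] M := e.toLinearMap ∘ₗ (d 0).rangeRestrict with hq
    have hfq : ∀ x, fM (q x) = d 0 x := fun x =>
      congrArg (LinearMap.range (d 0)).subtype (e.symm_apply_apply ((d 0).rangeRestrict x))
    have hqsurj : Function.Surjective q := e.surjective.comp (d 0).surjective_rangeRestrict
    have hfinj : Function.Injective fM :=
      (LinearMap.range (d 0)).injective_subtype.comp e.symm.injective
    have hcomp : fM ∘ₗ q = d (Int.negSucc 0 + 1) := LinearMap.ext hfq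
    have hqex : Function.Exact (d ((0:ℤ)+1)) q := by
      intro w
      constructor
      · intro hw
        have h2 : (d 0).rangeRestrict w = 0 := e.map_eq_zero_iff.mp hw
        have h3 : d 0 w = 0 := congrArg Subtype.val h2
        exact (hex 0 w).mp h3
      · rintro ⟨z', rfl⟩
        show e ((d 0).rangeRestrict (d ((0:ℤ)+1) z')) = 0
        rw [show (d 0).rangeRestrict (d ((0:ℤ)+1) z') = 0 from
          Subtype.ext ((hex 0).apply_apply_eq_zero z')]
        exact map_zero e
    refine ⟨⟨QN P, fM, DN P d, ?_, hfinj, ?_, ?_, ?_⟩, ?_⟩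
    · intro i
      cases i with
      | zero => exact hproj 0
      | succ j => exact hproj (Int.negSucc j)
    · -- Exact fM (DN P d 0)
      intro y
      constructor
      · intro hy
        obtain ⟨x, hx⟩ := (hex (Int.negSucc 0) y).mp hy
        exact ⟨q x, (hfq x).trans hx⟩
      · rintro ⟨m, rfl⟩
        obtain ⟨x, hx⟩ := (e.symm m).2
        have h1 : fM m = d (Int.negSucc 0 + 1) x := hx.symm
        have h2 := (hex (Int.negSucc 0)).apply_apply_eq_zero x
        rw [← h1] at h2
        exact h2
    · intro i
      cases i with
      | zero => exact hex (Int.negSucc 1)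
      | succ j => exact hex (Int.negSucc (j+2))
    · intro I hI
      have ht0 := htens I hI (Int.negSucc 0)
      have hqt : Function.Surjective (q.lTensor I) := LinearMap.lTensor_surjective I hqsurj
      have hfqt : ∀ x, (fM.lTensor I) ((q.lTensor I) x) = ((d (Int.negSucc 0 + 1)).lTensor I) x := by
        intro x
        rw [← LinearMap.comp_apply, ← LinearMap.lTensor_comp, hcomp]
      refine ⟨?_, ?_, ?_⟩
      · -- injectivity of fM ⊗ I
        have hker : ∀ y, fM.lTensor I y = 0 → y = 0 := by
          intro y hy
          obtain ⟨x, rfl⟩ := hqt y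
          have hd0 : (d (Int.negSucc 0 + 1)).lTensor I x = 0 := by rw [← hfqt x]; exact hy
          obtain ⟨z, hz⟩ := (htens I hI 0 x).mp hd0
          rw [← hz]
          exact (lTensor_exact (↑I) hqex hqsurj).apply_apply_eq_zero z
        intro a b hab
        have h4 : fM.lTensor I (a - b) = 0 := by rw [map_sub, sub_eq_zero]; exact hab
        exact sub_eq_zero.mp (hker _ h4)
      · -- Exact (fM ⊗ I) (DN 0 ⊗ I)
        intro y
        constructor
        · intro hy
          obtain ⟨x, hx⟩ := (ht0 y).mp hy
          exact ⟨q.lTensor I x, (hfqt x).trans hx⟩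
        · rintro ⟨m, rfl⟩
          obtain ⟨x, rfl⟩ := hqt m
          exact (congrArg ((DN P d 0).lTensor I) (hfqt x)).trans (ht0.apply_apply_eq_zero x)
      · intro i
        cases i with
        | zero => exact htens I hI (Int.negSucc 1)
        | succ j => exact htens I hI (Int.negSucc (j+2))
    · -- Tor vanishing
      intro i hi I hI
      obtain ⟨n, rfl⟩ : ∃ n, i = n+1 := ⟨i-1, (Nat.succ_pred_eq_of_pos hi).symm⟩
      exact (tor_succ_subsingleton_iff M (fun j => P (Int.ofNat (j+1)))
        (fun j => d (Int.ofNat (j+1))) q (fun j => hex (Int.ofNat (j+1)))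
        (fun j => hproj (Int.ofNat (j+1))) hqsurj hqex I n).mpr (htens I hI (Int.ofNat (n+1)))
  · rintro ⟨⟨Pr, f, ds, hP, hfinj, hf0, hdd, hten⟩, htor⟩
    refine ⟨PZ M Pr, dZ M Pr f ds, ?_, ?_, ?_, ?_⟩
    · rintro ((_|n)|n)
      · exact hP 0
      · exact fmod_projective M n
      · exact hP (n+1)
    · rintro ((_|n)|(_|n))
      · exact (exact_inj_comp_iff hfinj).mpr (exact_d0_pmod M)
      · exact exact_dmod M n
      · exact (exact_comp_surj_iff (pmod_surjective M)).mpr hf0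
      · cases n with
        | zero => exact hdd 0
        | succ k => exact hdd (k+1)
    · have hrange : LinearMap.range (f ∘ₗ pmod M) = LinearMap.range f := by
        rw [LinearMap.range_comp_of_range_eq_top]
        exact LinearMap.range_eq_top.mpr (pmod_surjective M)
      exact ⟨(LinearEquiv.ofEq _ _ hrange).trans (LinearEquiv.ofInjective f hfinj).symm⟩
    · intro I hI i
      obtain ⟨hti, hte0, hts⟩ := hten I hI
      rcases i with ((_|n)|(_|n))
      · show Function.Exact ((dmod M 0).lTensor I) ((f ∘ₗ pmod M).lTensor I)
        rw [LinearMap.lTensor_comp]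
        exact (exact_inj_comp_iff hti).mpr
          (lTensor_exact (↑I) (exact_d0_pmod M) (pmod_surjective M))
      · exact (tor_succ_subsingleton_iff M (Fmod M) (dmod M) (pmod M) (exact_dmod M)
          (fmod_projective M) (pmod_surjective M) (exact_d0_pmod M) I n).mp
          (htor (n+1) (Nat.succ_pos n) I hI)
      · show Function.Exact ((f ∘ₗ pmod M).lTensor I) ((ds 0).lTensor I)
        rw [LinearMap.lTensor_comp]
        exact (exact_comp_surj_iff (LinearMap.lTensor_surjective I (pmod_surjective M))).mpr hte0
      · cases n with
        | zero => exact hts 0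
        | succ k => exact hts (k+1)
end

section
/- If M is a PGF R-module, then Torᵢ^R(I', M) = 0 for every i > 0 and every module I' of finite injective dimension. -/
open CategoryTheory

universe u

variable (R : Type u) [CommRing R]

open MonoidalCategory

namespace PGFProof

variable {R : Type u} [CommRing R]

lemma subsingleton_of_isZero {X : ModuleCat.{u} R} (h : Limits.IsZero X) :
    Subsingleton X := by
  have h0 : (𝟙 X : X ⟶ X) = 0 := h.eq_of_src _ _
  refine ⟨fun a b => ?_⟩
  have ha : ∀ c : X, c = 0 := fun c => by
    calc c = (𝟙 X : X ⟶ X) c := rfl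
    _ = (0 : X ⟶ X) c := by rw [h0]
    _ = 0 := rfl
  rw [ha a, ha b]

lemma isZero_X₂ {T : ShortComplex (ModuleCat.{u} R)} (hT : T.Exact)
    (h1 : Limits.IsZero T.X₁) (h3 : Limits.IsZero T.X₃) : Limits.IsZero T.X₂ := by
  haveI := subsingleton_of_isZero h1
  haveI := subsingleton_of_isZero h3
  have key : ∀ x : T.X₂, x = 0 := fun x => by
    obtain ⟨y, hy⟩ := (T.moduleCat_exact_iff).1 hT x (Subsingleton.elim _ _)
    rw [← hy, Subsingleton.elim y 0, map_zero]
  haveI : Subsingleton T.X₂ := ⟨fun a b => by rw [key a, key b]⟩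
  exact ModuleCat.isZero_of_subsingleton _

section

variable (P : ℤ → ModuleCat.{u} R) (d : (i : ℤ) → P (i + 1) →ₗ[R] P i)

noncomputable def Qc (hz : ∀ i : ℤ, (d i) ∘ₗ (d (i+1)) = 0) :
    ChainComplex (ModuleCat.{u} R) ℕ :=
  ChainComplex.of (fun n => P ((n : ℤ) + 1))
    (fun n => (ModuleCat.ofHom (d ((n : ℤ) + 1)) : P ((n:ℤ)+1+1) ⟶ P ((n:ℤ)+1)))
    (fun n => ModuleCat.hom_ext (by rw [ModuleCat.hom_comp, ModuleCat.hom_zero]; exact hz ((n:ℤ)+1)))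

variable (hz : ∀ i : ℤ, (d i) ∘ₗ (d (i+1)) = 0)

lemma Qc_d (n : ℕ) :
    (Qc P d hz).d (n+1) n = (ModuleCat.ofHom (d ((n:ℤ)+1)) : P ((n:ℤ)+1+1) ⟶ P ((n:ℤ)+1)) :=
  by
    unfold Qc
    exact ChainComplex.of_d (fun (n : ℕ) => P ((n : ℤ) + 1))
      (fun (n : ℕ) => (ModuleCat.ofHom (d ((n : ℤ) + 1)) : P ((n:ℤ)+1+1) ⟶ P ((n:ℤ)+1))) n

variable {M : ModuleCat.{u} R}

noncomputable def πlin (e : LinearMap.range (d 0) ≃ₗ[R] M) :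
    (Qc P d hz).X 0 ⟶ M :=
  (ModuleCat.ofHom (e.toLinearMap ∘ₗ (d 0).rangeRestrict : P ((0:ℤ)+1) →ₗ[R] M) : P ((0:ℤ)+1) ⟶ M)

lemma πlin_surj (e : LinearMap.range (d 0) ≃ₗ[R] M) :
    Function.Surjective (πlin P d hz e) :=
  by show Function.Surjective (⇑e ∘ ⇑(d 0).rangeRestrict); exact e.surjective.comp (d 0).surjective_rangeRestrict

lemma ker_πlin (hex : ∀ i : ℤ, Function.Exact (d (i + 1)) (d i))
    (e : LinearMap.range (d 0) ≃ₗ[R] M) :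
    LinearMap.ker (πlin P d hz e).hom = LinearMap.range ((Qc P d hz).d 1 0).hom := by
  have h1 : LinearMap.range ((Qc P d hz).d 1 0).hom = LinearMap.range (d 1) := by
    rw [Qc_d]; rfl
  rw [h1]
  show LinearMap.ker (e.toLinearMap ∘ₗ (d 0).rangeRestrict) = LinearMap.range (d 1)
  rw [LinearMap.ker_comp, LinearEquiv.ker, Submodule.comap_bot, LinearMap.ker_rangeRestrict]
  exact LinearMap.exact_iff.mp (hex 0)

lemma d10_π (hex : ∀ i : ℤ, Function.Exact (d (i + 1)) (d i))
    (e : LinearMap.range (d 0) ≃ₗ[R] M) :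
    (Qc P d hz).d 1 0 ≫ πlin P d hz e = 0 := by
  ext x
  show πlin P d hz e ((Qc P d hz).d 1 0 x) = 0
  have h : (Qc P d hz).d 1 0 x ∈ LinearMap.ker (πlin P d hz e).hom := by
    rw [ker_πlin P d hz hex e]
    exact ⟨x, rfl⟩
  exact h


lemma Qc_exactAt (hex : ∀ i : ℤ, Function.Exact (d (i + 1)) (d i)) (n : ℕ) :
    (Qc P d hz).ExactAt (n+1) := by
  rw [HomologicalComplex.exactAt_iff' _ (n+2) (n+1) n (by simp) (by simp)]
  apply (ShortComplex.ShortExact.moduleCat_exact_iff_function_exact _).2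
  show Function.Exact ((Qc P d hz).d (n+2) (n+1)) ((Qc P d hz).d (n+1) n)
  rw [Qc_d, Qc_d]
  exact hex ((n:ℤ)+1)

noncomputable def res (hex : ∀ i : ℤ, Function.Exact (d (i + 1)) (d i))
    (hproj : ∀ i, Module.Projective R (P i))
    (e : LinearMap.range (d 0) ≃ₗ[R] M) : ProjectiveResolution M where
  complex := Qc P d hz
  projective n := (IsProjective.iff_projective.{u, u} ((Qc P d hz).X n)).mp (hproj _)
  π := (ChainComplex.toSingle₀Equiv _ _).symm ⟨πlin P d hz e, d10_π P d hz hex e⟩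
  quasiIso := ⟨fun n => by
    cases n with
    | zero =>
      rw [ChainComplex.quasiIsoAt₀_iff, ShortComplex.quasiIso_iff_of_zeros']
      · constructor
        <;> simp only [HomologicalComplex.shortComplexFunctor'_map_τ₂, ChainComplex.toSingle₀Equiv_symm_apply_f_zero]
        · exact (ShortComplex.ShortExact.moduleCat_exact_iff_function_exact _).2
            (LinearMap.exact_iff.mpr (ker_πlin P d hz hex e))
        · exact (ModuleCat.epi_iff_surjective _).2 (πlin_surj P d hz e)
      all_goals simp [HomologicalComplex.shape]
      all_goals exact rfl
    | succ n =>
      rw [quasiIsoAt_iff_exactAt']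
      · exact Qc_exactAt P d hz hex n
      · apply ChainComplex.exactAt_succ_single_obj⟩


noncomputable def TQ (A : ModuleCat.{u} R) : ChainComplex (ModuleCat.{u} R) ℕ :=
  (((tensoringLeft (ModuleCat.{u} R)).obj A).mapHomologicalComplex _).obj (Qc P d hz)

lemma TQ_d (A : ModuleCat.{u} R) (n : ℕ) :
    (TQ P d hz A).d (n+1) n =
      ((tensoringLeft (ModuleCat.{u} R)).obj A).map
        (ModuleCat.ofHom (d ((n:ℤ)+1)) : P ((n:ℤ)+1+1) ⟶ P ((n:ℤ)+1)) := by
  show ((tensoringLeft (ModuleCat.{u} R)).obj A).map ((Qc P d hz).d (n+1) n) = _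
  rw [Qc_d]
  exact rfl

lemma tens_coe (A : ModuleCat.{u} R) {X Y : ModuleCat.{u} R} (g : X ⟶ Y) :
    ⇑(((tensoringLeft (ModuleCat.{u} R)).obj A).map g) = ⇑(LinearMap.lTensor A g.hom) := rfl

lemma isZero_TQ_homology_injective (I : ModuleCat.{u} R) (hI : Module.Injective R I)
    (htens : ∀ i, Function.Exact ((d (i + 1)).lTensor I) ((d i).lTensor I)) (n : ℕ) :
    Limits.IsZero ((TQ P d hz I).homology (n+1)) := by
  rw [← HomologicalComplex.exactAt_iff_isZero_homology]
  rw [HomologicalComplex.exactAt_iff' _ (n+2) (n+1) n (by simp) (by simp)]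
  apply (ShortComplex.ShortExact.moduleCat_exact_iff_function_exact _).2
  show Function.Exact ((TQ P d hz I).d (n+2) (n+1)) ((TQ P d hz I).d (n+1) n)
  rw [TQ_d, TQ_d]
  show Function.Exact ⇑(LinearMap.lTensor I (d ((n:ℤ)+1+1))) ⇑(LinearMap.lTensor I (d ((n:ℤ)+1)))
  exact htens ((n:ℤ)+1)

noncomputable def Tmap {A B : ModuleCat.{u} R} (g : A ⟶ B) :
    TQ P d hz A ⟶ TQ P d hz B :=
  (NatTrans.mapHomologicalComplex ((tensoringLeft (ModuleCat.{u} R)).map g) _).app (Qc P d hz)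

lemma Tmap_f {A B : ModuleCat.{u} R} (g : A ⟶ B) (n : ℕ) :
    (Tmap P d hz g).f n =
      (ModuleCat.ofHom (g.hom.rTensor ((Qc P d hz).X n) : _ →ₗ[R] _) :
        (TQ P d hz A).X n ⟶ (TQ P d hz B).X n) := rfl

end

end PGFProof

section PGFMain

namespace PGFProof

variable {R : Type u} [CommRing R]
variable (P : ℤ → ModuleCat.{u} R) (d : (i : ℤ) → P (i + 1) →ₗ[R] P i)
variable (hz : ∀ i : ℤ, (d i) ∘ₗ (d (i+1)) = 0)

lemma isZero_TQ_homology_of_idLE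
    (hproj : ∀ i, Module.Projective R (P i))
    (htens : ∀ (I : ModuleCat.{u} R), Module.Injective R I →
      ∀ i, Function.Exact ((d (i + 1)).lTensor I) ((d i).lTensor I)) :
    ∀ (n : ℕ) (X : ModuleCat.{u} R), idLE R n X →
      ∀ i : ℕ, Limits.IsZero ((TQ P d hz X).homology (i+1)) := by
  intro n
  induction n with
  | zero =>
    intro X hX i
    exact isZero_TQ_homology_injective P d hz X hX (htens X hX) i
  | succ n ih =>
    intro X hX i
    obtain ⟨I, f, hIinj, hfinj, hquot⟩ := hX
    let Cq : ModuleCat.{u} R := ModuleCat.of R (I ⧸ LinearMap.range f)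
    let q : I ⟶ Cq := ModuleCat.ofHom (LinearMap.range f).mkQ
    have hw : Tmap P d hz (ModuleCat.ofHom f : X ⟶ I) ≫ Tmap P d hz q = 0 := by
      ext m : 1
      apply ModuleCat.hom_ext
      show (LinearMap.rTensor ((Qc P d hz).X m) q.hom) ∘ₗ
        (LinearMap.rTensor ((Qc P d hz).X m) f) = 0
      rw [← LinearMap.rTensor_comp]
      have h0 : (q.hom : I →ₗ[R] Cq) ∘ₗ f = 0 := LinearMap.range_mkQ_comp f
      rw [h0, LinearMap.rTensor_zero]
    let S : ShortComplex (HomologicalComplex (ModuleCat.{u} R) (ComplexShape.down ℕ)) :=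
      ShortComplex.mk (Tmap P d hz (ModuleCat.ofHom f : X ⟶ I)) (Tmap P d hz q) hw
    have hS : S.ShortExact := by
      apply HomologicalComplex.shortExact_of_degreewise_shortExact
      intro m
      haveI : Module.Projective R ((Qc P d hz).X m) := hproj _
      haveI : Mono (S.map (HomologicalComplex.eval
          (ModuleCat.{u} R) (ComplexShape.down ℕ) m)).f := by
        refine (ModuleCat.mono_iff_injective _).2 ?_
        show Function.Injective ⇑(LinearMap.rTensor ((Qc P d hz).X m) f)
        exact Module.Flat.rTensor_preserves_injective_linearMap f hfinj
      haveI : Epi (S.map (HomologicalComplex.eval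
          (ModuleCat.{u} R) (ComplexShape.down ℕ) m)).g := by
        refine (ModuleCat.epi_iff_surjective _).2 ?_
        show Function.Surjective ⇑(LinearMap.rTensor ((Qc P d hz).X m) (q.hom : I →ₗ[R] Cq))
        exact LinearMap.rTensor_surjective _ (Submodule.mkQ_surjective _)
      refine ⟨?_⟩
      apply (ShortComplex.ShortExact.moduleCat_exact_iff_function_exact _).2
      show Function.Exact ⇑(LinearMap.rTensor ((Qc P d hz).X m) f)
        ⇑(LinearMap.rTensor ((Qc P d hz).X m) (q.hom : I →ₗ[R] Cq))
      exact rTensor_exact _ (LinearMap.exact_map_mkQ_range f) (Submodule.mkQ_surjective _)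
    have h1 := hS.homology_exact₁ (i+2) (i+1) rfl
    exact isZero_X₂ h1 (ih Cq hquot (i+1))
      (isZero_TQ_homology_injective P d hz I hIinj (htens I hIinj) i)

end PGFProof

end PGFMain

theorem stmt2 (M : ModuleCat.{u} R) (hM : IsPGF R M) :
    ∀ i : ℕ, 0 < i → ∀ (I' : ModuleCat.{u} R), (∃ n, idLE R n I') →
      Subsingleton (torM R i I' M) := by
  obtain ⟨P, d, hproj, hex, ⟨e⟩, htens⟩ := hM
  have hz : ∀ i : ℤ, (d i) ∘ₗ (d (i+1)) = 0 := fun i =>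
    LinearMap.ext fun x => (hex i).apply_apply_eq_zero x
  intro i hi I' hI'
  obtain ⟨n, hn⟩ := hI'
  obtain ⟨j, rfl⟩ : ∃ j, i = j + 1 := ⟨i - 1, (Nat.succ_pred_eq_of_pos hi).symm⟩
  have h0 : Limits.IsZero ((PGFProof.TQ P d hz I').homology (j+1)) :=
    PGFProof.isZero_TQ_homology_of_idLE P d hz hproj htens n I' hn j
  have eIso : torM R (j+1) I' M ≅ (PGFProof.TQ P d hz I').homology (j+1) :=
    (PGFProof.res P d hz hex hproj e).isoLeftDerivedObj
      ((CategoryTheory.MonoidalCategory.tensoringLeft (ModuleCat.{u} R)).obj I') (j+1)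
  exact PGFProof.subsingleton_of_isZero (Limits.IsZero.of_iso h0 eIso)
end

section
/- Every PGF R-module is a direct summand of a strongly PGF R-module. -/
open CategoryTheory

universe u

variable (R : Type u) [CommRing R]

section AuxLemmas

open scoped DirectSum

variable {R : Type u} [CommRing R] {ι : Type*} [DecidableEq ι]
variable {β γ δ : ι → Type*}
  [∀ i, AddCommGroup (β i)] [∀ i, Module R (β i)]
  [∀ i, AddCommGroup (γ i)] [∀ i, Module R (γ i)]
  [∀ i, AddCommGroup (δ i)] [∀ i, Module R (δ i)]

/-- The componentwise linear map between direct sums. -/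
noncomputable def dmap (φ : ∀ i, β i →ₗ[R] γ i) : (⨁ i, β i) →ₗ[R] ⨁ i, γ i :=
  DirectSum.toModule R ι _ fun i => DirectSum.lof R ι γ i ∘ₗ φ i

lemma dmap_lof (φ : ∀ i, β i →ₗ[R] γ i) (i : ι) (b : β i) :
    dmap φ (DirectSum.lof R ι β i b) = DirectSum.lof R ι γ i (φ i b) := by
  simp [dmap, DirectSum.toModule_lof]

lemma dmap_apply (φ : ∀ i, β i →ₗ[R] γ i) (x : ⨁ i, β i) (j : ι) :
    dmap φ x j = φ j (x j) := by
  induction x using DirectSum.induction_on with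
  | zero => simp
  | of i b =>
    rw [← DirectSum.lof_eq_of R, dmap_lof]
    by_cases h : i = j
    · subst h
      simp [DirectSum.lof_eq_of, DirectSum.of_eq_same]
    · simp [DirectSum.lof_eq_of, DirectSum.of_eq_of_ne _ _ _ (Ne.symm h)]
  | add a b ha hb =>
    rw [map_add, DirectSum.add_apply, DirectSum.add_apply, map_add, ha, hb]

lemma dext {x y : ⨁ i, β i} (h : ∀ j, x j = y j) : x = y :=
  DFinsupp.ext h

lemma dmap_injective (φ : ∀ i, β i →ₗ[R] γ i) (h : ∀ i, Function.Injective (φ i)) :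
    Function.Injective (dmap φ) := by
  intro x y hxy
  refine dext fun j => h j ?_
  rw [← dmap_apply, ← dmap_apply, hxy]

lemma dmap_surjective (φ : ∀ i, β i →ₗ[R] γ i) (h : ∀ i, Function.Surjective (φ i)) :
    Function.Surjective (dmap φ) := by
  classical
  intro y
  refine ⟨DirectSum.mk β y.support (fun i => Classical.choose (h i.1 (y i.1))),
    dext fun j => ?_⟩
  rw [dmap_apply]
  by_cases hj : j ∈ y.support
  · rw [DirectSum.mk_apply_of_mem hj]
    exact Classical.choose_spec (h j (y j))
  · rw [DirectSum.mk_apply_of_notMem hj, map_zero]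
    exact (DFinsupp.notMem_support_iff.mp hj).symm

lemma dmap_exact (φ : ∀ i, β i →ₗ[R] γ i) (ψ : ∀ i, γ i →ₗ[R] δ i)
    (h : ∀ i, Function.Exact (φ i) (ψ i)) :
    Function.Exact (dmap φ) (dmap ψ) := by
  classical
  intro y
  constructor
  · intro hy
    have hy' : ∀ j, ψ j (y j) = 0 := fun j => by
      rw [← dmap_apply, hy, DirectSum.zero_apply]
    have hmem : ∀ j, ∃ x, φ j x = y j := fun j => (h j (y j)).mp (hy' j)
    refine ⟨DirectSum.mk β y.support (fun i => Classical.choose (hmem i.1)),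
      dext fun j => ?_⟩
    rw [dmap_apply]
    by_cases hj : j ∈ y.support
    · rw [DirectSum.mk_apply_of_mem hj]
      exact Classical.choose_spec (hmem j)
    · rw [DirectSum.mk_apply_of_notMem hj, map_zero]
      exact (DFinsupp.notMem_support_iff.mp hj).symm
  · rintro ⟨x, rfl⟩
    exact dext fun j => by
      rw [dmap_apply, dmap_apply, DirectSum.zero_apply]
      exact (h j).apply_apply_eq_zero (x j)

lemma dmap_lTensor_natural (Q : Type u) [AddCommGroup Q] [Module R Q]
    (φ : ∀ i, β i →ₗ[R] γ i) :
    (dmap (R := R) fun i => (φ i).lTensor Q) ∘ₗ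
      (TensorProduct.directSumRight R R Q β).toLinearMap =
    (TensorProduct.directSumRight R R Q γ).toLinearMap ∘ₗ (dmap (R := R) φ).lTensor Q := by
  apply TensorProduct.ext'
  intro q x
  simp only [LinearMap.comp_apply, LinearEquiv.coe_coe]
  induction x using DirectSum.induction_on with
  | zero => simp
  | of i b =>
    rw [← DirectSum.lof_eq_of R, TensorProduct.directSumRight_tmul_lof, dmap_lof]
    rw [show (LinearMap.lTensor Q (dmap (R := R) φ)) (q ⊗ₜ[R] DirectSum.lof R ι β i b)
        = q ⊗ₜ[R] (dmap (R := R) φ) (DirectSum.lof R ι β i b) from rfl]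
    rw [dmap_lof, TensorProduct.directSumRight_tmul_lof]
    rfl
  | add a b ha hb =>
    simp only [TensorProduct.tmul_add, map_add, ha, hb]

end AuxLemmas

section MainConstruction

open scoped DirectSum

theorem aux_main {R : Type u} [CommRing R] (M : ModuleCat.{u} R) (P : ℤ → ModuleCat.{u} R)
    (d : ∀ i : ℤ, P (i + 1) →ₗ[R] P i)
    (hproj : ∀ i, Module.Projective R (P i))
    (hex : ∀ i, Function.Exact (d (i + 1)) (d i))
    (φ : (LinearMap.range (d 0)) ≃ₗ[R] M)
    (htens : ∀ (I : ModuleCat.{u} R), Module.Injective R I →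
      ∀ i, Function.Exact ((d (i + 1)).lTensor I) ((d i).lTensor I)) :
    ∃ N : ModuleCat.{u} R, IsStronglyPGF R N ∧ IsDirectSummand R M N := by
  classical
  let C : ℤ → Type u := fun i => ↥(LinearMap.range (d i))
  let A : ℤ → Type u := fun i => C (i + 1)
  let B : ℤ → Type u := fun i => ↥(P (i + 1))
  let inc : ∀ i : ℤ, A i →ₗ[R] B i := fun i => (LinearMap.range (d (i + 1))).subtype
  let pr : ∀ i : ℤ, B i →ₗ[R] C i := fun i => (d i).rangeRestrict
  have hpr_surj : ∀ i, Function.Surjective (pr i) :=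
    fun i => LinearMap.surjective_rangeRestrict (d i)
  have hinc_inj : ∀ i, Function.Injective (inc i) := fun i => Subtype.val_injective
  have hcomp_ex : ∀ i, Function.Exact (inc i) (pr i) := by
    intro i
    rw [LinearMap.exact_iff]
    show LinearMap.ker ((d i).rangeRestrict)
      = LinearMap.range ((LinearMap.range (d (i + 1))).subtype)
    rw [LinearMap.ker_rangeRestrict, LinearMap.exact_iff.mp (hex i), Submodule.range_subtype]
  have hcomp0 : ∀ i, pr i ∘ₗ inc i = 0 := by
    intro i
    apply LinearMap.ext
    rintro ⟨x, hx⟩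
    have hx' : x ∈ LinearMap.ker (d i) := by
      rw [LinearMap.exact_iff.mp (hex i)]; exact hx
    show (d i).rangeRestrict x = 0
    apply Subtype.ext
    simpa using hx'
  have hd_fact : ∀ i, d (i + 1) = inc i ∘ₗ pr (i + 1) := fun i => LinearMap.ext fun x => rfl
  -- the equivalence reindexing the direct sum
  let e : (⨁ i : ℤ, C i) ≃ₗ[R] ⨁ i : ℤ, A i :=
    DirectSum.lequivCongrLeft R (Equiv.subRight (1 : ℤ))
  let f : (⨁ i : ℤ, C i) →ₗ[R] ⨁ i : ℤ, B i := dmap inc ∘ₗ e.toLinearMap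
  let g : (⨁ i : ℤ, B i) →ₗ[R] ⨁ i : ℤ, C i := dmap pr
  haveI hBproj : ∀ i : ℤ, Module.Projective R (B i) := fun i => hproj (i + 1)
  have hQproj : Module.Projective R (⨁ i : ℤ, B i) :=
    inferInstanceAs (Module.Projective R (Π₀ i : ℤ, B i))
  have hfinj : Function.Injective f := by
    have h1 : Function.Injective (dmap (R := R) inc) := dmap_injective inc hinc_inj
    show Function.Injective (dmap inc ∘ₗ e.toLinearMap)
    rw [LinearMap.coe_comp]
    exact h1.comp e.injective
  have hgsurj : Function.Surjective g := dmap_surjective pr hpr_surj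
  have hfg : Function.Exact f g := by
    rw [LinearMap.exact_iff]
    have h2 : Function.Exact (dmap (R := R) inc) (dmap (R := R) pr) :=
      dmap_exact inc pr hcomp_ex
    show LinearMap.ker (dmap pr) = LinearMap.range (dmap inc ∘ₗ e.toLinearMap)
    rw [LinearMap.range_comp_of_range_eq_top _ (LinearMap.range_eq_top.mpr e.surjective)]
    exact LinearMap.exact_iff.mp h2
  -- tensor conditions
  have htensor : ∀ (I : ModuleCat.{u} R), Module.Injective R I →
      Function.Injective (f.lTensor I) ∧ Function.Exact (f.lTensor I) (g.lTensor I) := by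
    intro I hI
    have hTsurj : ∀ i, Function.Surjective ((pr i).lTensor (I : Type u)) :=
      fun i => LinearMap.lTensor_surjective _ (hpr_surj i)
    have hT0 : ∀ i, (pr i).lTensor (I : Type u) ∘ₗ (inc i).lTensor I = 0 := fun i => by
      rw [← LinearMap.lTensor_comp, hcomp0 i, LinearMap.lTensor_zero]
    have hsub : ∀ i, (LinearMap.range (d i)).subtype ∘ₗ pr i = d i :=
      fun i => LinearMap.ext fun x => rfl
    have hTd : ∀ i, (d i).lTensor (I : Type u)
        = ((LinearMap.range (d i)).subtype).lTensor I ∘ₗ (pr i).lTensor I := fun i => by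
      conv_lhs => rw [← hsub i]
      rw [LinearMap.lTensor_comp]
    have hTd' : ∀ i, (d (i + 1)).lTensor (I : Type u)
        = (inc i).lTensor I ∘ₗ (pr (i + 1)).lTensor I := fun i => by
      conv_lhs => rw [hd_fact i]
      rw [LinearMap.lTensor_comp]
    -- componentwise injectivity
    have tinj : ∀ i, Function.Injective ((inc i).lTensor (I : Type u)) := by
      intro i
      have key : ∀ t, (inc i).lTensor (I : Type u) t = 0 → t = 0 := by
        intro t h0
        obtain ⟨s, hs⟩ := hTsurj (i + 1) t
        have h1 : (d (i + 1)).lTensor (I : Type u) s = 0 := by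
          rw [hTd' i, LinearMap.comp_apply, hs, h0]
        obtain ⟨u, hu⟩ := (htens I hI (i + 1) s).mp h1
        have hz : pr (i + 1) ∘ₗ d (i + 1 + 1) = 0 := by
          have : pr (i + 1) ∘ₗ d (i + 1 + 1)
              = (pr (i + 1) ∘ₗ inc (i + 1)) ∘ₗ pr (i + 1 + 1) := by
            rw [LinearMap.comp_assoc, ← hd_fact (i + 1)]
          rw [this, hcomp0 (i + 1), LinearMap.zero_comp]
        rw [← hs, ← hu, ← LinearMap.comp_apply, ← LinearMap.lTensor_comp, hz,
          LinearMap.lTensor_zero, LinearMap.zero_apply]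
      intro x y hxy
      have : x - y = 0 := key _ (by rw [map_sub, hxy, sub_self])
      exact sub_eq_zero.mp this
    -- componentwise exactness
    have tex : ∀ i, Function.Exact ((inc i).lTensor (I : Type u)) ((pr i).lTensor I) := by
      intro i
      apply LinearMap.exact_of_comp_eq_zero_of_ker_le_range (hT0 i)
      intro t ht
      rw [LinearMap.mem_ker] at ht
      have h1 : (d i).lTensor (I : Type u) t = 0 := by
        rw [hTd i, LinearMap.comp_apply, ht, map_zero]
      obtain ⟨u, hu⟩ := (htens I hI i t).mp h1
      rw [hTd' ] at hu
      exact ⟨(pr (i + 1)).lTensor (I : Type u) u, hu⟩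
    -- naturality squares
    have hnatA := dmap_lTensor_natural (R := R) (I : Type u) inc
    have hnatB := dmap_lTensor_natural (R := R) (I : Type u) pr
    -- injectivity of (dmap inc).lTensor
    have hdminj : Function.Injective ((dmap (R := R) inc).lTensor (I : Type u)) := by
      intro x y hxy
      apply (TensorProduct.directSumRight R R (I : Type u) A).injective
      apply dmap_injective _ tinj
      have hx := DFunLike.congr_fun hnatA x
      have hy := DFunLike.congr_fun hnatA y
      simp only [LinearMap.comp_apply, LinearEquiv.coe_coe] at hx hy
      rw [hx, hy, hxy]
    -- surjectivity/bijectivity of (e.toLinearMap).lTensor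
    have hcombo1 : (e.symm.toLinearMap).lTensor (I : Type u) ∘ₗ (e.toLinearMap).lTensor I
        = LinearMap.id := by
      rw [← LinearMap.lTensor_comp]
      have : e.symm.toLinearMap ∘ₗ e.toLinearMap = LinearMap.id :=
        LinearMap.ext fun x => e.symm_apply_apply x
      rw [this, LinearMap.lTensor_id]
    have hcombo2 : (e.toLinearMap).lTensor (I : Type u) ∘ₗ (e.symm.toLinearMap).lTensor I
        = LinearMap.id := by
      rw [← LinearMap.lTensor_comp]
      have : e.toLinearMap ∘ₗ e.symm.toLinearMap = LinearMap.id :=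
        LinearMap.ext fun x => e.apply_symm_apply x
      rw [this, LinearMap.lTensor_id]
    have heinj : Function.Injective ((e.toLinearMap).lTensor (I : Type u)) :=
      Function.LeftInverse.injective (g := (e.symm.toLinearMap).lTensor (I : Type u))
        (fun x => DFunLike.congr_fun hcombo1 x)
    have hesurj : Function.Surjective ((e.toLinearMap).lTensor (I : Type u)) :=
      Function.RightInverse.surjective (g := (e.symm.toLinearMap).lTensor (I : Type u))
        (fun x => DFunLike.congr_fun hcombo2 x)
    have hfT : f.lTensor (I : Type u)
        = (dmap (R := R) inc).lTensor (I : Type u) ∘ₗ (e.toLinearMap).lTensor I := by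
      rw [← LinearMap.lTensor_comp]
    constructor
    · rw [hfT, LinearMap.coe_comp]
      exact hdminj.comp heinj
    · -- exactness
      have hex3 : Function.Exact (dmap (R := R) fun i => (inc i).lTensor (I : Type u))
          (dmap (R := R) fun i => (pr i).lTensor (I : Type u)) :=
        dmap_exact _ _ tex
      have hex2 : Function.Exact ((dmap (R := R) inc).lTensor (I : Type u))
          ((dmap (R := R) pr).lTensor (I : Type u)) :=
        (Function.Exact.iff_of_ladder_linearEquiv
          (e₁ := TensorProduct.directSumRight R R (I : Type u) A)
          (e₂ := TensorProduct.directSumRight R R (I : Type u) B)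
          (e₃ := TensorProduct.directSumRight R R (I : Type u) C)
          hnatA hnatB).mp hex3
      rw [LinearMap.exact_iff]
      show LinearMap.ker ((dmap (R := R) pr).lTensor (I : Type u))
        = LinearMap.range (f.lTensor (I : Type u))
      rw [hfT, LinearMap.range_comp_of_range_eq_top _ (LinearMap.range_eq_top.mpr hesurj)]
      exact LinearMap.exact_iff.mp hex2
  -- assemble
  refine ⟨ModuleCat.of R (⨁ i : ℤ, C i),
    ⟨ModuleCat.of R (⨁ i : ℤ, B i), f, g, hQproj, hfinj, hfg, hgsurj, htensor⟩, ?_⟩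
  refine ⟨(DirectSum.lof R ℤ C 0) ∘ₗ φ.symm.toLinearMap,
    φ.toLinearMap ∘ₗ DirectSum.component R ℤ C 0, ?_⟩
  apply LinearMap.ext
  intro m
  show φ ((DirectSum.component R ℤ C 0) ((DirectSum.lof R ℤ C 0) (φ.symm m))) = m
  rw [DirectSum.component.lof_self]
  exact φ.apply_symm_apply m

end MainConstruction

theorem stmt5 (M : ModuleCat.{u} R) (h : IsPGF R M) :
    ∃ N : ModuleCat.{u} R, IsStronglyPGF R N ∧ IsDirectSummand R M N := by
  obtain ⟨P, d, hproj, hex, ⟨φ⟩, htens⟩ := h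
  exact aux_main M P d hproj hex φ htens
end

section
/- An R-module M is strongly PGF if and only if there exists a short exact sequence 0 → M → P → M → 0 with P projective and Tor₁^R(I, M) = 0 for every injective module I. -/
open CategoryTheory

universe u

variable (R : Type u) [CommRing R]

section Aux

variable {R} {M P : ModuleCat.{u} R}

noncomputable def perComplex (f : M →ₗ[R] P) (g : P →ₗ[R] M)
    (hgf : ∀ x, g (f x) = 0) : ChainComplex (ModuleCat.{u} R) ℕ :=
  ChainComplex.of (fun _ => P) (fun _ => ModuleCat.ofHom (f ∘ₗ g))
    (fun _ => ModuleCat.hom_ext <| LinearMap.ext fun x => by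
      show f (g (f (g x))) = 0
      rw [hgf, map_zero])

lemma perComplex_d (f : M →ₗ[R] P) (g : P →ₗ[R] M) (hgf : ∀ x, g (f x) = 0) (n : ℕ) :
    (perComplex f g hgf).d (n + 1) n = ModuleCat.ofHom (f ∘ₗ g) := by
  simp [perComplex]

noncomputable def perRes (f : M →ₗ[R] P) (g : P →ₗ[R] M)
    (hproj : Module.Projective R P) (hf : Function.Injective f)
    (hfg : Function.Exact f g) (hg : Function.Surjective g) :
    ProjectiveResolution M := by
  have hgf : ∀ x, g (f x) = 0 := fun x => hfg.apply_apply_eq_zero x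
  exact
  { complex := perComplex f g hgf
    projective := fun n => (IsProjective.iff_projective.{u,u} P).mp hproj
    π := (ChainComplex.toSingle₀Equiv _ _).symm ⟨ModuleCat.ofHom g, by
      rw [perComplex_d]
      exact ModuleCat.hom_ext <| LinearMap.ext fun x => by show g (f (g x)) = 0; rw [hgf]⟩
    quasiIso := ⟨fun n => by
      cases n with
      | zero =>
        rw [ChainComplex.quasiIsoAt₀_iff, ShortComplex.quasiIso_iff_of_zeros']
        · refine ⟨?_, ?_⟩
          · rw [ShortComplex.moduleCat_exact_iff]
            intro x hx
            simp only [HomologicalComplex.shortComplexFunctor'_obj_X₂,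
              HomologicalComplex.shortComplexFunctor'_obj_f,
              HomologicalComplex.shortComplexFunctor'_map_τ₂,
              ChainComplex.toSingle₀Equiv_symm_apply_f_zero, perComplex_d] at hx ⊢
            obtain ⟨y, hy⟩ := (hfg x).mp hx
            obtain ⟨z, hz⟩ := hg y
            exact ⟨z, by show f (g z) = x; rw [hz, hy]⟩
          · rw [ModuleCat.epi_iff_surjective]
            simp only [HomologicalComplex.shortComplexFunctor'_map_τ₂,
              ChainComplex.toSingle₀Equiv_symm_apply_f_zero]
            exact hg
        all_goals rfl
      | succ n =>
        rw [quasiIsoAt_iff_exactAt']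
        · rw [HomologicalComplex.exactAt_iff' _ (n + 2) (n + 1) n (by simp) (by simp)]
          rw [ShortComplex.moduleCat_exact_iff]
          intro x hx
          simp only [HomologicalComplex.shortComplexFunctor'_obj_X₂,
            HomologicalComplex.shortComplexFunctor'_obj_f,
            HomologicalComplex.shortComplexFunctor'_obj_g, perComplex_d] at hx ⊢
          have h1 : g x = 0 := hf (by rw [map_zero]; exact hx)
          obtain ⟨y, hy⟩ := (hfg x).mp h1
          obtain ⟨z, hz⟩ := hg y
          exact ⟨z, by show f (g z) = x; rw [hz, hy]⟩
        · exact ChainComplex.exactAt_succ_single_obj _ _⟩ }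

section Tor2
open MonoidalCategory


lemma moduleCat_subsingleton_iff_isZero (X : ModuleCat.{u} R) :
    Subsingleton X ↔ Limits.IsZero X := by
  constructor
  · intro h; exact ModuleCat.isZero_of_subsingleton X
  · intro h
    refine ⟨fun a b => ?_⟩
    have : (𝟙 X : X ⟶ X) = 0 := h.eq_of_src _ _
    calc a = (𝟙 X : X ⟶ X) a := rfl
    _ = (0 : X ⟶ X) a := by rw [this]
    _ = (𝟙 X : X ⟶ X) b := by rw [this]; rfl
    _ = b := rfl

lemma subsingleton_torM_iff (f : M →ₗ[R] P) (g : P →ₗ[R] M)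
    (hproj : Module.Projective R P) (hf : Function.Injective f)
    (hfg : Function.Exact f g) (hg : Function.Surjective g)
    (I : ModuleCat.{u} R) :
    Subsingleton (torM R 1 I M) ↔
      Function.Exact ((f ∘ₗ g).lTensor I) ((f ∘ₗ g).lTensor I) := by
  have hgf : ∀ x, g (f x) = 0 := fun x => hfg.apply_apply_eq_zero x
  set res := perRes f g hproj hf hfg hg with hres
  set F := (MonoidalCategory.tensoringLeft (ModuleCat.{u} R)).obj I with hF
  have e : torM R 1 I M ≅ (HomologicalComplex.homologyFunctor _ _ 1).obj
      ((F.mapHomologicalComplex _).obj res.complex) := res.isoLeftDerivedObj F 1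
  rw [moduleCat_subsingleton_iff_isZero]
  have h2 : Limits.IsZero (torM R 1 I M) ↔
      Limits.IsZero ((HomologicalComplex.homologyFunctor _ _ 1).obj
        ((F.mapHomologicalComplex _).obj res.complex)) :=
    ⟨fun h => h.of_iso e.symm, fun h => h.of_iso e⟩
  rw [h2]
  have h3 := HomologicalComplex.exactAt_iff_isZero_homology
    ((F.mapHomologicalComplex (ComplexShape.down ℕ)).obj res.complex) 1
  rw [show ((HomologicalComplex.homologyFunctor (ModuleCat.{u} R) (ComplexShape.down ℕ) 1).obj
      ((F.mapHomologicalComplex _).obj res.complex)) =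
      ((F.mapHomologicalComplex (ComplexShape.down ℕ)).obj res.complex).homology 1 from rfl,
    ← h3]
  rw [HomologicalComplex.exactAt_iff' _ 2 1 0 (by simp) (by simp),
    ShortComplex.moduleCat_exact_iff]
  have hcomp : (f ∘ₗ g) ∘ₗ (f ∘ₗ g) = 0 := LinearMap.ext fun x => by
    show f (g (f (g x))) = 0; rw [hgf, map_zero]
  have hzero : ∀ z, ((f ∘ₗ g).lTensor I) (((f ∘ₗ g).lTensor I) z) = 0 := fun z => by
    rw [← LinearMap.lTensor_comp_apply, hcomp, LinearMap.lTensor_zero, LinearMap.zero_apply]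
  have hd : ∀ (n : ℕ), ((F.mapHomologicalComplex (ComplexShape.down ℕ)).obj res.complex).d
      (n + 1) n = ModuleCat.ofHom ((f ∘ₗ g).lTensor I) := fun n => by
    rw [Functor.mapHomologicalComplex_obj_d]
    show F.map ((perComplex f g hgf).d (n + 1) n) = _
    rw [perComplex_d]
    rfl
  simp only [HomologicalComplex.shortComplexFunctor'_obj_X₂,
    HomologicalComplex.shortComplexFunctor'_obj_f,
    HomologicalComplex.shortComplexFunctor'_obj_g]
  have hd2 : ((F.mapHomologicalComplex (ComplexShape.down ℕ)).obj res.complex).d 2 1 =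
      ModuleCat.ofHom ((f ∘ₗ g).lTensor I) := hd 1
  have hd1 : ((F.mapHomologicalComplex (ComplexShape.down ℕ)).obj res.complex).d 1 0 =
      ModuleCat.ofHom ((f ∘ₗ g).lTensor I) := hd 0
  rw [hd2, hd1]
  constructor
  · intro H y
    constructor
    · intro hy
      obtain ⟨z, hz⟩ := H y hy
      exact ⟨z, hz⟩
    · rintro ⟨z, rfl⟩
      exact hzero z
  · intro H x hx
    exact (H x).mp hx

end Tor2

lemma aux_exact_iff_inj (f : M →ₗ[R] P) (g : P →ₗ[R] M)
    (hfg : Function.Exact f g) (hg : Function.Surjective g) (I : ModuleCat.{u} R) :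
    Function.Exact ((f ∘ₗ g).lTensor I) ((f ∘ₗ g).lTensor I) ↔
      Function.Injective (f.lTensor I) := by
  have hex : Function.Exact (f.lTensor I) (g.lTensor I) := lTensor_exact I hfg hg
  have hgs : Function.Surjective (g.lTensor I) := LinearMap.lTensor_surjective I hg
  rw [LinearMap.lTensor_comp]
  set F := f.lTensor I with hFdef
  set G := g.lTensor I with hGdef
  constructor
  · intro h
    rw [injective_iff_map_eq_zero]
    intro x hx
    obtain ⟨y, rfl⟩ := hgs x
    obtain ⟨z, hz⟩ := (h y).mp (by simpa using hx)
    have h0 : G (F (G z)) = 0 := hex.apply_apply_eq_zero (G z)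
    calc G y = G ((F ∘ₗ G) z) := by rw [hz]
    _ = 0 := by simpa using h0
  · intro h y
    constructor
    · intro hy
      have h0 : G y = 0 := h (by simpa using hy)
      obtain ⟨w, hw⟩ := (hex y).mp h0
      obtain ⟨z, rfl⟩ := hgs w
      exact ⟨z, by simpa using hw⟩
    · rintro ⟨z, rfl⟩
      have h0 : G (F (G z)) = 0 := hex.apply_apply_eq_zero (G z)
      show F (G (F (G z))) = 0
      rw [h0, map_zero]

end Aux

theorem stmt6 (M : ModuleCat.{u} R) :
    IsStronglyPGF R M ↔
      ∃ (P : ModuleCat.{u} R) (f : M →ₗ[R] P) (g : P →ₗ[R] M),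
        Module.Projective R P ∧ Function.Injective f ∧ Function.Exact f g ∧
        Function.Surjective g ∧
        ∀ (I : ModuleCat.{u} R), Module.Injective R I → Subsingleton (torM R 1 I M) := by
  constructor
  · rintro ⟨P, f, g, hP, hf, hfg, hg, h⟩
    refine ⟨P, f, g, hP, hf, hfg, hg, fun I hI => ?_⟩
    rw [subsingleton_torM_iff f g hP hf hfg hg I, aux_exact_iff_inj f g hfg hg I]
    exact (h I hI).1
  · rintro ⟨P, f, g, hP, hf, hfg, hg, h⟩
    refine ⟨P, f, g, hP, hf, hfg, hg, fun I hI => ?_⟩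
    refine ⟨?_, lTensor_exact I hfg hg⟩
    rw [← aux_exact_iff_inj f g hfg hg I, ← subsingleton_torM_iff f g hP hf hfg hg I]
    exact h I hI
end

section
/- If M admits a short exact sequence 0 → M → P → M → 0 with P projective and Tor₁^R(I, M) = 0 for every injective module I, then Torᵢ^R(I', M) = 0 for every i > 0 and every module I' of finite injective dimension. -/
open CategoryTheory

universe u

variable (R : Type u) [CommRing R]

/-! ### Auxiliary material for `stmt7` -/

section Stmt7Aux
open MonoidalCategory

variable {R}
variable (M P : ModuleCat.{u} R) (f : M →ₗ[R] P) (g : P →ₗ[R] M)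

lemma Stmt7.subsingleton_of_isZero {X : ModuleCat.{u} R} (h : Limits.IsZero X) :
    Subsingleton X := by
  constructor
  intro a b
  have h1 : (𝟙 X : X ⟶ X) = 0 := h.eq_of_src _ _
  calc a = (𝟙 X : X ⟶ X) a := rfl
    _ = (0 : X ⟶ X) a := by rw [h1]
    _ = (0 : X ⟶ X) b := rfl
    _ = (𝟙 X : X ⟶ X) b := by rw [h1]
    _ = b := rfl

lemma Stmt7.isZero_of_subsingleton {X : ModuleCat.{u} R} (h : Subsingleton X) :
    Limits.IsZero X :=
  ModuleCat.isZero_of_subsingleton X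

/-- The periodic complex `⋯ → P → P → P` with differentials `f ∘ g`. -/
noncomputable def auxC (hfg : Function.Exact f g) : ChainComplex (ModuleCat.{u} R) ℕ :=
  ChainComplex.of (fun _ => P) (fun _ => (ModuleCat.ofHom (f ∘ₗ g) : P ⟶ P))
    (fun _ => by
      ext x
      have h0 : g (f (g x)) = 0 := hfg.apply_apply_eq_zero (g x)
      show f (g (f (g x))) = 0
      rw [h0, map_zero])

lemma auxC_d (hfg : Function.Exact f g) (n : ℕ) :
    (auxC M P f g hfg).d (n + 1) n = (ModuleCat.ofHom (f ∘ₗ g) : P ⟶ P) :=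
  by unfold auxC; exact ChainComplex.of_d (fun _ => P) (fun _ => (ModuleCat.ofHom (f ∘ₗ g) : P ⟶ P)) n

lemma auxC_exactAt (hf : Function.Injective f) (hfg : Function.Exact f g)
    (hg : Function.Surjective g) (n : ℕ) : (auxC M P f g hfg).ExactAt (n + 1) := by
  rw [HomologicalComplex.exactAt_iff' _ (n + 2) (n + 1) n (by simp) (by simp),
    ShortComplex.moduleCat_exact_iff]
  intro x hx
  have hx' : f (g x) = 0 := by simp [auxC_d] at hx; exact hx
  have hgx : g x = 0 := hf (by simpa using hx')
  obtain ⟨m, hm⟩ := (hfg x).mp hgx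
  obtain ⟨p, hp⟩ := hg m
  refine ⟨p, ?_⟩
  show (auxC M P f g hfg).d (n + 2) (n + 1) p = x
  rw [auxC_d]
  show f (g p) = x
  rw [hp, hm]

/-- The periodic complex is a projective resolution of `M`. -/
noncomputable def auxRes (hP : Module.Projective R P) (hf : Function.Injective f)
    (hfg : Function.Exact f g) (hg : Function.Surjective g) :
    ProjectiveResolution M where
  complex := auxC M P f g hfg
  projective n := (IsProjective.iff_projective P).mp hP
  π := (ChainComplex.toSingle₀Equiv _ _).symm ⟨ModuleCat.ofHom g, by
        rw [auxC_d]
        ext x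
        exact hfg.apply_apply_eq_zero (g x)⟩
  quasiIso := ⟨fun n => by
    cases n with
    | zero =>
      rw [ChainComplex.quasiIsoAt₀_iff, ShortComplex.quasiIso_iff_of_zeros']
      · constructor
        · rw [ShortComplex.moduleCat_exact_iff]
          intro x hx
          have hgx : g x = 0 := by
            simp [ChainComplex.toSingle₀Equiv] at hx; exact hx
          obtain ⟨m, hm⟩ := (hfg x).mp hgx
          obtain ⟨p, hp⟩ := hg m
          refine ⟨p, ?_⟩
          show (auxC M P f g hfg).d 1 0 p = x
          rw [auxC_d]
          show f (g p) = x
          rw [hp, hm]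
        · rw [ModuleCat.epi_iff_surjective]
          intro y
          obtain ⟨p, hp⟩ := hg y
          exact ⟨p, hp⟩
      all_goals rfl
    | succ n =>
      rw [quasiIsoAt_iff_exactAt' _ _ (ChainComplex.exactAt_succ_single_obj _ _)]
      exact auxC_exactAt M P f g hf hfg hg n⟩

/-- The complex obtained by tensoring the periodic resolution with `A`. -/
noncomputable def tcx (hfg : Function.Exact f g) (A : ModuleCat.{u} R) :
    ChainComplex (ModuleCat.{u} R) ℕ :=
  (((tensoringLeft (ModuleCat.{u} R)).obj A).mapHomologicalComplex _).obj (auxC M P f g hfg)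

lemma tcx_d (hfg : Function.Exact f g) (A : ModuleCat.{u} R) (n : ℕ) :
    (tcx M P f g hfg A).d (n + 1) n
      = ((tensoringLeft (ModuleCat.{u} R)).obj A).map (ModuleCat.ofHom (f ∘ₗ g) : P ⟶ P) := by
  show ((tensoringLeft (ModuleCat.{u} R)).obj A).map ((auxC M P f g hfg).d (n + 1) n) = _
  rw [auxC_d]
  rfl

/-- `Tor i (A, M)` is computed by the tensored periodic resolution. -/
noncomputable def torIsoHomology (hP : Module.Projective R P) (hf : Function.Injective f)
    (hfg : Function.Exact f g) (hg : Function.Surjective g) (A : ModuleCat.{u} R) (i : ℕ) :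
    torM R i A M ≅ (tcx M P f g hfg A).homology i :=
  (auxRes M P f g hP hf hfg hg).isoLeftDerivedObj ((tensoringLeft (ModuleCat.{u} R)).obj A) i

/-- Periodicity of the homology of the tensored periodic resolution. -/
noncomputable def tcxHomologyPeriod (hfg : Function.Exact f g) (A : ModuleCat.{u} R) (n : ℕ) :
    (tcx M P f g hfg A).homology (n + 1) ≅ (tcx M P f g hfg A).homology 1 := by
  refine ShortComplex.homologyMapIso
      ((tcx M P f g hfg A).isoSc' (n + 2) (n + 1) n (by simp) (by simp)) ≪≫
    ?_ ≪≫
    (ShortComplex.homologyMapIso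
      ((tcx M P f g hfg A).isoSc' 2 1 0 (by simp) (by simp))).symm
  have e : ((tcx M P f g hfg A).sc' (n + 2) (n + 1) n) ≅ ((tcx M P f g hfg A).sc' 2 1 0) :=
    ShortComplex.isoMk (Iso.refl _) (Iso.refl _) (Iso.refl _)
      (by
        show 𝟙 _ ≫ (tcx M P f g hfg A).d (1 + 1) 1
          = (tcx M P f g hfg A).d (n + 1 + 1) (n + 1) ≫ 𝟙 _
        rw [Category.id_comp, Category.comp_id, tcx_d, tcx_d])
      (by
        show 𝟙 _ ≫ (tcx M P f g hfg A).d 1 0 = (tcx M P f g hfg A).d (n + 1) n ≫ 𝟙 _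
        rw [Category.id_comp, Category.comp_id, tcx_d, tcx_d])
  exact ShortComplex.homologyMapIso e

/-- Dimension shifting: vanishing of `Tor 1` propagates to all higher `Tor`. -/
lemma tor_shift (hP : Module.Projective R P) (hf : Function.Injective f)
    (hfg : Function.Exact f g) (hg : Function.Surjective g) (A : ModuleCat.{u} R) (i : ℕ)
    (h1 : Subsingleton (torM R 1 A M)) : Subsingleton (torM R (i + 1) A M) := by
  have z1 : Limits.IsZero ((tcx M P f g hfg A).homology 1) :=
    (Stmt7.isZero_of_subsingleton h1).of_iso (torIsoHomology M P f g hP hf hfg hg A 1).symm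
  have zi : Limits.IsZero ((tcx M P f g hfg A).homology (i + 1)) :=
    z1.of_iso (tcxHomologyPeriod M P f g hfg A i)
  exact Stmt7.subsingleton_of_isZero (zi.of_iso (torIsoHomology M P f g hP hf hfg hg A (i + 1)))

/-- The long exact sequence step. -/
lemma les_step (hP : Module.Projective R P) (hf : Function.Injective f)
    (hfg : Function.Exact f g) (hg : Function.Surjective g)
    (I' I : ModuleCat.{u} R) (ι : I' →ₗ[R] I) (hι : Function.Injective ι) (k : ℕ)
    (h3 : Subsingleton (torM R (k + 2) (ModuleCat.of R (I ⧸ LinearMap.range ι)) M))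
    (h2 : Subsingleton (torM R (k + 1) I M)) :
    Subsingleton (torM R (k + 1) I' M) := by
  haveI : Module.Projective R P := hP
  haveI : Module.Flat R P := inferInstance
  set C : ModuleCat.{u} R := ModuleCat.of R (I ⧸ LinearMap.range ι) with hC
  set q : I ⟶ C := ModuleCat.ofHom (LinearMap.range ι).mkQ with hq
  have hq0 : (ModuleCat.ofHom ι : I' ⟶ I) ≫ q = 0 := by
    ext x
    exact (Submodule.Quotient.mk_eq_zero _).mpr ⟨x, rfl⟩
  have hqe : Function.Exact (ι : I' →ₗ[R] I) (q.hom : I →ₗ[R] C) := by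
    intro y
    constructor
    · intro hy
      exact (Submodule.Quotient.mk_eq_zero _).mp hy
    · rintro ⟨x, rfl⟩
      exact (Submodule.Quotient.mk_eq_zero _).mpr ⟨x, rfl⟩
  -- the short exact sequence of tensored complexes
  set T : ShortComplex (ChainComplex (ModuleCat.{u} R) ℕ) := ShortComplex.mk
      ((NatTrans.mapHomologicalComplex ((tensoringLeft (ModuleCat.{u} R)).map (ModuleCat.ofHom ι : I' ⟶ I)) _).app
        (auxC M P f g hfg))
      ((NatTrans.mapHomologicalComplex ((tensoringLeft (ModuleCat.{u} R)).map q) _).app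
        (auxC M P f g hfg))
      (by
        apply HomologicalComplex.hom_ext
        intro n
        erw [HomologicalComplex.comp_f, NatTrans.mapHomologicalComplex_app_f,
          NatTrans.mapHomologicalComplex_app_f, ← NatTrans.comp_app, ← Functor.map_comp, hq0]
        simp
        rfl)
    with hT
  have hTse : T.ShortExact := by
    apply HomologicalComplex.shortExact_of_degreewise_shortExact
    intro n
    haveI hflat : Module.Flat R ((auxC M P f g hfg).X n) := ‹Module.Flat R P›
    have hexn : Function.Exact (LinearMap.rTensor ((auxC M P f g hfg).X n) ι) (LinearMap.rTensor ((auxC M P f g hfg).X n) (q.hom : I →ₗ[R] C)) :=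
      rTensor_exact (↥((auxC M P f g hfg).X n)) hqe (Submodule.mkQ_surjective _)
    refine { exact := ?_, mono_f := ?_, epi_g := ?_ }
    · rw [ShortComplex.moduleCat_exact_iff]
      intro x hx
      exact (hexn x).mp hx
    · rw [ModuleCat.mono_iff_injective]
      exact Module.Flat.rTensor_preserves_injective_linearMap (ι : I' →ₗ[R] I) hι
    · rw [ModuleCat.epi_iff_surjective]
      exact LinearMap.rTensor_surjective (↥((auxC M P f g hfg).X n)) (Submodule.mkQ_surjective _)
  have hrel : (ComplexShape.down ℕ).Rel (k + 2) (k + 1) := rfl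
  have hex := hTse.homology_exact₁ (k + 2) (k + 1) hrel
  have z1 : Limits.IsZero (T.X₃.homology (k + 2)) :=
    (Stmt7.isZero_of_subsingleton h3).of_iso
      (torIsoHomology M P f g hP hf hfg hg C (k + 2)).symm
  have z3 : Limits.IsZero (T.X₂.homology (k + 1)) :=
    (Stmt7.isZero_of_subsingleton h2).of_iso
      (torIsoHomology M P f g hP hf hfg hg I (k + 1)).symm
  have z2 : Limits.IsZero (T.X₁.homology (k + 1)) :=
    hex.isZero_X₂ (z1.eq_of_src _ _) (z3.eq_of_tgt _ _)
  exact Stmt7.subsingleton_of_isZero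
    (z2.of_iso (torIsoHomology M P f g hP hf hfg hg I' (k + 1)))

end Stmt7Aux

theorem stmt7 (M P : ModuleCat.{u} R) (f : M →ₗ[R] P) (g : P →ₗ[R] M)
    (hP : Module.Projective R P) (hf : Function.Injective f) (hfg : Function.Exact f g)
    (hg : Function.Surjective g)
    (htor : ∀ (I : ModuleCat.{u} R), Module.Injective R I → Subsingleton (torM R 1 I M)) :
    ∀ i : ℕ, 0 < i → ∀ (I' : ModuleCat.{u} R), (∃ n, idLE R n I') →
      Subsingleton (torM R i I' M) := by
  have main : ∀ n : ℕ, ∀ (I' : ModuleCat.{u} R), idLE R n I' →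
      ∀ k : ℕ, Subsingleton (torM R (k + 1) I' M) := by
    intro n
    induction n with
    | zero =>
      intro I' hI' k
      exact tor_shift M P f g hP hf hfg hg I' k (htor I' hI')
    | succ n ih =>
      intro I' hI' k
      obtain ⟨I, ι, hI, hι, hrest⟩ := hI'
      exact les_step M P f g hP hf hfg hg I' I ι hι k
        (ih _ hrest (k + 1)) (tor_shift M P f g hP hf hfg hg I k (htor I hI))
  intro i hi I' hid
  obtain ⟨n, hn⟩ := hid
  obtain ⟨k, rfl⟩ : ∃ k, i = k + 1 := ⟨i - 1, by omega⟩
  exact main n I' hn k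
end
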